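/- arXiv:1910.07305 — 9 statements merged into one kernel-verified Lean document; each statement's English description precedes it below -/
import Mathlib

section
/- An interval graph on a nonempty finite set of intervals is connected if and only if the union of the intervals forms a single interval (i.e., the union is an interval of the real line). -/
/-- The interval graph of a family of closed intervals `[l v, r v]`:
two distinct vertices are adjacent iff their intervals intersect. -/
def intervalGraph {V : Type} (l r : V → ℝ) : SimpleGraph V where
  Adj u v := u ≠ v ∧ max (l u) (l v) ≤ min (r u) (r v)
  symm := by
    constructor
    intro u v ⟨h₁, h₂⟩
    exact ⟨h₁.symm, by rw [max_comm, min_comm]; exact h₂⟩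
  loopless := by constructor; intro u h; exact h.1 rfl

lemma walk_aux {V : Type} (l r : V → ℝ) {z : ℝ} :
    ∀ {u v : V}, (intervalGraph l r).Walk u v → ∀ {x y : ℝ},
    x ∈ Set.Icc (l u) (r u) → y ∈ Set.Icc (l v) (r v) →
    x ≤ z → z ≤ y → ∃ t, z ∈ Set.Icc (l t) (r t) := by
  intro u v w
  induction w with
  | nil =>
    intro x y hx hy hxz hzy
    exact ⟨_, hx.1.trans hxz, hzy.trans hy.2⟩
  | @cons u a v h p ih =>
    intro x y hx hy hxz hzy
    by_cases hz : z ≤ r u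
    · exact ⟨u, hx.1.trans hxz, hz⟩
    · push_neg at hz
      exact ih (x := max (l u) (l a))
        ⟨le_max_right _ _, h.2.trans (min_le_right _ _)⟩ hy
        ((h.2.trans (min_le_left _ _)).trans hz.le) hzy

/-- an interval graph on a nonempty finite family of (nonempty closed)
intervals is connected iff the union of the intervals is a single interval of ℝ
(i.e. the union is order-connected). -/
theorem stmt_1 {V : Type} [Fintype V] [Nonempty V] (l r : V → ℝ)
    (hlr : ∀ v, l v ≤ r v) :
    (intervalGraph l r).Connected ↔ (⋃ v, Set.Icc (l v) (r v)).OrdConnected := by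
  constructor
  · intro hconn
    constructor
    intro x hx y hy z hz
    obtain ⟨u, hu⟩ := Set.mem_iUnion.1 hx
    obtain ⟨v, hv⟩ := Set.mem_iUnion.1 hy
    obtain ⟨w⟩ := hconn u v
    obtain ⟨t, ht⟩ := walk_aux l r w hu hv hz.1 hz.2
    exact Set.mem_iUnion.2 ⟨t, ht⟩
  · intro hord
    refine ⟨fun u v => ?_⟩
    by_contra hvu
    set S : Set V := {w | (intervalGraph l r).Reachable u w} with hS
    have hvS : v ∉ S := hvu
    set s : Set ℝ := ⋃ v, Set.Icc (l v) (r v) with hs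
    set A : Set ℝ := ⋃ w ∈ S, Set.Icc (l w) (r w) with hA
    set B : Set ℝ := ⋃ w ∈ Sᶜ, Set.Icc (l w) (r w) with hB
    have hdisj : A ∩ B = ∅ := by
      ext x
      simp only [Set.mem_inter_iff, Set.mem_empty_iff_false, iff_false]
      rintro ⟨hxA, hxB⟩
      obtain ⟨w₁, hw₁, hx₁⟩ := Set.mem_iUnion₂.1 hxA
      obtain ⟨w₂, hw₂, hx₂⟩ := Set.mem_iUnion₂.1 hxB
      have hne : w₁ ≠ w₂ := fun h => hw₂ (h ▸ hw₁)
      have hadj : (intervalGraph l r).Adj w₁ w₂ :=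
        ⟨hne, (max_le hx₁.1 hx₂.1).trans (le_min hx₁.2 hx₂.2)⟩
      exact hw₂ (hw₁.trans hadj.reachable)
    have hAclosed : IsClosed A := Set.Finite.isClosed_biUnion (Set.toFinite S)
      (fun i _ => isClosed_Icc)
    have hBclosed : IsClosed B := Set.Finite.isClosed_biUnion (Set.toFinite Sᶜ)
      (fun i _ => isClosed_Icc)
    have hsAB : s = A ∪ B := by
      rw [hA, hB, hs]
      ext x
      simp only [Set.mem_iUnion, Set.mem_union]
      constructor
      · rintro ⟨w, hw⟩
        by_cases h : w ∈ S
        · exact Or.inl ⟨w, h, hw⟩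
        · exact Or.inr ⟨w, h, hw⟩
      · rintro (⟨w, _, hw⟩ | ⟨w, _, hw⟩) <;> exact ⟨w, hw⟩
    have hpre : IsPreconnected s := hord.isPreconnected
    have huA : l u ∈ A := Set.mem_biUnion (by exact SimpleGraph.Reachable.refl u)
      ⟨le_refl _, hlr u⟩
    have hvB : l v ∈ B := Set.mem_biUnion hvS ⟨le_refl _, hlr v⟩
    obtain ⟨x, hxs, hxA, hxB⟩ := hpre Aᶜ Bᶜ (hAclosed.isOpen_compl) (hBclosed.isOpen_compl)
      (by intro x hx; by_cases h : x ∈ A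
          · exact Or.inr (fun hxB => (Set.eq_empty_iff_forall_notMem.1 hdisj x) ⟨h, hxB⟩)
          · exact Or.inl h)
      ⟨l v, hsAB ▸ Or.inr hvB, fun h => (Set.eq_empty_iff_forall_notMem.1 hdisj (l v)) ⟨h, hvB⟩⟩
      ⟨l u, hsAB ▸ Or.inl huA, fun h => (Set.eq_empty_iff_forall_notMem.1 hdisj (l u)) ⟨huA, h⟩⟩
    rcases hsAB ▸ hxs with h | h
    · exact hxA h
    · exact hxB h
end

section
/- Let S = {s_1,...,s_n} be a set of positive integers and B a positive integer. Construct a star graph with center a blue vertex c of weight B and leaves red vertices u_1,...,u_n where u_i has weight s_i. Then there exists a nonempty connected induced subgraph H of the star with Σ_{v ∈ V(H) ∩ Blue} w(v) = Σ_{v ∈ V(H) ∩ Red} w(v) if and only if there exists a subset S' ⊆ S with Σ_{s ∈ S'} s = B. -/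
/-- The star graph on `Option (Fin n)`: the center `none` is adjacent to every
leaf `some i`, and there are no other edges. -/
def starGraph (n : ℕ) : SimpleGraph (Option (Fin n)) where
  Adj u v := u ≠ v ∧ (u = none ∨ v = none)
  symm := ⟨by rintro u v ⟨h₁, h₂⟩; exact ⟨h₁.symm, h₂.symm⟩⟩
  loopless := ⟨by rintro u ⟨h, _⟩; exact h rfl⟩

/-- encode subset sum on a star. The center is a blue vertex of
weight `B > 0` and the leaves are red vertices of weights `s 1, …, s n > 0`.
The star has a nonempty connected induced subgraph whose total blue weight
equals its total red weight iff some subset of `{s 1, …, s n}` sums to `B`. -/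
theorem stmt_6 (n : ℕ) (s : Fin n → ℕ) (B : ℕ) (hB : 0 < B) (hs : ∀ i, 0 < s i) :
    (∃ H : Finset (Option (Fin n)), H.Nonempty ∧
      ((starGraph n).induce (↑H : Set (Option (Fin n)))).Connected ∧
      (∑ v ∈ H.filter (fun v => v = none), Option.elim v B s) =
        (∑ v ∈ H.filter (fun v => v ≠ none), Option.elim v B s)) ↔
    (∃ S' : Finset (Fin n), ∑ i ∈ S', s i = B) := by
  constructor
  · rintro ⟨H, hne, hconn, hbal⟩
    have hc : (none : Option (Fin n)) ∈ H := by
      by_contra hc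
      have h1 : H.filter (fun v => v = none) = ∅ := by
        apply Finset.filter_eq_empty_iff.mpr
        rintro v hv rfl; exact hc hv
      have h2 : 0 < ∑ v ∈ H.filter (fun v => v ≠ none), Option.elim v B s := by
        obtain ⟨v, hv⟩ := hne
        apply Finset.sum_pos
        · rintro w hw
          rcases w with _ | i
          · simp at hw
          · exact hs i
        · exact ⟨v, Finset.mem_filter.mpr ⟨hv, fun h => hc (h ▸ hv)⟩⟩
      rw [h1, Finset.sum_empty] at hbal
      omega
    refine ⟨Finset.univ.filter (fun i => some i ∈ H), ?_⟩
    have h1 : H.filter (fun v => v = none) = {none} := by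
      ext v
      simp only [Finset.mem_filter, Finset.mem_singleton]
      constructor
      · exact fun h => h.2
      · rintro rfl; exact ⟨hc, rfl⟩
    have h2 : H.filter (fun v => v ≠ none) =
        (Finset.univ.filter (fun i => some i ∈ H)).image some := by
      ext v
      rcases v with _ | i <;> simp
    rw [h1, h2, Finset.sum_image (by simp)] at hbal
    simpa using hbal.symm
  · rintro ⟨S', hS⟩
    refine ⟨insert none (S'.image some), ⟨none, Finset.mem_insert_self _ _⟩, ?_, ?_⟩
    · have hc : (none : Option (Fin n)) ∈
          (↑(insert none (S'.image some)) : Set (Option (Fin n))) := by simp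
      rw [SimpleGraph.connected_iff]
      refine ⟨fun u v => ?_, ⟨⟨none, hc⟩⟩⟩
      have key : ∀ w : (↑(insert none (S'.image some)) : Set (Option (Fin n))),
          ((starGraph n).induce (↑(insert none (S'.image some)) : Set (Option (Fin n)))).Reachable
            w ⟨none, hc⟩ := by
        intro w
        by_cases hw : w.1 = none
        · have : w = ⟨none, hc⟩ := Subtype.ext hw
          rw [this]
        · exact SimpleGraph.Adj.reachable ⟨hw, Or.inr rfl⟩
      exact (key u).trans (key v).symm
    · have h1 : (insert none (S'.image some)).filter (fun v => v = none) = {none} := by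
        ext v
        simp only [Finset.mem_filter, Finset.mem_singleton, Finset.mem_insert]
        constructor
        · exact fun h => h.2
        · rintro rfl; exact ⟨Or.inl rfl, rfl⟩
      have h2 : (insert none (S'.image some)).filter (fun v => v ≠ none) = S'.image some := by
        ext v
        rcases v with _ | i <;> simp
      rw [h1, h2, Finset.sum_image (by simp)]
      simpa using hS.symm
end

section
/- Let (E, 𝓕) be an instance of Exact 3-Cover with |E| = 3k and 𝓕 = {S_1,...,S_n}, n = 3k. Construct the bipartite graph G with vertex set V_E ∪ V_𝓕 ∪ {w}, where V_E = {v_e : e ∈ E} (blue, weight 1), V_𝓕 = {v_S : S ∈ 𝓕} (red, weight n²), and w blue of weight k(n² − 3); edges are {v_e, v_S} for e ∈ S and {w, v_S} for all S ∈ 𝓕. Then 𝓕 contains a subcollection of pairwise disjoint sets covering E if and only if G contains a connected induced subgraph H with Σ_{v ∈ V(H) ∩ Blue} w(v) = Σ_{v ∈ V(H) ∩ Red} w(v) and total weight at least 2kn². -/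
/-- Vertices of the reduction graph: `inl e` is the blue vertex `v_e` (`e ∈ E`),
`inr (inl i)` is the red vertex `v_{S_i}` (`S_i ∈ 𝓕`), and `inr (inr ())` is the
extra blue vertex `w`. -/
abbrev X3CVtx (E : Type) (n : ℕ) := E ⊕ (Fin n ⊕ Unit)

/-- The bipartite reduction graph: `v_e` is adjacent to `v_{S_i}` iff `e ∈ S_i`,
and `w` is adjacent to every `v_{S_i}`. -/
def x3cGraph (E : Type) (n : ℕ) (F : Fin n → Finset E) : SimpleGraph (X3CVtx E n) :=
  SimpleGraph.fromRel (fun u v =>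
    (∃ e i, u = Sum.inl e ∧ v = Sum.inr (Sum.inl i) ∧ e ∈ F i) ∨
    (∃ i, u = Sum.inr (Sum.inl i) ∧ v = Sum.inr (Sum.inr ())))

/-- `true` on the blue vertices `V_E ∪ {w}`, `false` on the red vertices `V_𝓕`. -/
def x3cBlue {E : Type} {n : ℕ} : X3CVtx E n → Bool
  | Sum.inl _ => true
  | Sum.inr (Sum.inl _) => false
  | Sum.inr (Sum.inr _) => true

/-- Vertex weights: `v_e` has weight `1`, `v_{S_i}` has weight `n²`,
and `w` has weight `k (n² - 3)`. -/
def x3cWt {E : Type} (n k : ℕ) : X3CVtx E n → ℕ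
  | Sum.inl _ => 1
  | Sum.inr (Sum.inl _) => n ^ 2
  | Sum.inr (Sum.inr _) => k * (n ^ 2 - 3)

lemma x3c_adj_inl {E : Type} {n : ℕ} {F : Fin n → Finset E} {e : E} {v : X3CVtx E n}
    (h : (x3cGraph E n F).Adj (Sum.inl e) v) :
    ∃ i, v = Sum.inr (Sum.inl i) ∧ e ∈ F i := by
  rw [x3cGraph, SimpleGraph.fromRel_adj] at h
  obtain ⟨hne, h | h⟩ := h <;>
    rcases h with ⟨e', i, h1, h2, h3⟩ | ⟨i, h1, h2⟩
  · cases h1; exact ⟨i, h2, h3⟩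
  · exact absurd h1 (by simp)
  · exact absurd h2 (by simp)
  · exact absurd h2 (by simp)

lemma x3c_adj_es {E : Type} {n : ℕ} {F : Fin n → Finset E} {e : E} {i : Fin n}
    (h : e ∈ F i) : (x3cGraph E n F).Adj (Sum.inl e) (Sum.inr (Sum.inl i)) := by
  rw [x3cGraph, SimpleGraph.fromRel_adj]
  exact ⟨by simp, Or.inl (Or.inl ⟨e, i, rfl, rfl, h⟩)⟩

lemma x3c_adj_sw {E : Type} {n : ℕ} {F : Fin n → Finset E} {i : Fin n} :
    (x3cGraph E n F).Adj (Sum.inr (Sum.inl i)) (Sum.inr (Sum.inr ())) := by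
  rw [x3cGraph, SimpleGraph.fromRel_adj]
  exact ⟨by simp, Or.inl (Or.inr ⟨i, rfl, rfl⟩)⟩

lemma x3c_fwd (E : Type) [Fintype E] [DecidableEq E] (k n : ℕ)
    (hn : n = 3 * k) (hE : Fintype.card E = 3 * k)
    (F : Fin n → Finset E) (hF : ∀ i, (F i).card = 3)
    (I : Finset (Fin n))
    (hdisj : (I : Set (Fin n)).Pairwise (fun i j => Disjoint (F i) (F j)))
    (hcov : ∀ e : E, ∃ i ∈ I, e ∈ F i) (hIcard : I.card = k) :
    (∃ H : Finset (X3CVtx E n),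
      ((x3cGraph E n F).induce (↑H : Set (X3CVtx E n))).Connected ∧
      (∑ v ∈ H.filter (fun v => x3cBlue v = true), x3cWt n k v) =
        (∑ v ∈ H.filter (fun v => x3cBlue v = false), x3cWt n k v) ∧
      2 * k * n ^ 2 ≤ ∑ v ∈ H, x3cWt n k v) := by
  classical
  set w₀ : X3CVtx E n := Sum.inr (Sum.inr ()) with hw₀
  set H : Finset (X3CVtx E n) := (Finset.univ.image (Sum.inl : E → X3CVtx E n)) ∪
      (I.image (fun i => Sum.inr (Sum.inl i))) ∪ {w₀} with hH
  have hmem : ∀ v : X3CVtx E n, v ∈ H ↔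
      (∃ e, v = Sum.inl e) ∨ (∃ i ∈ I, v = Sum.inr (Sum.inl i)) ∨ v = w₀ := by
    intro v
    simp [hH, Finset.mem_union, Finset.mem_image, eq_comm]
    exact or_comm.trans or_assoc
  have hwmem : w₀ ∈ H := (hmem w₀).2 (Or.inr (Or.inr rfl))
  have hkey : 3 * k + k * (n ^ 2 - 3) = k * n ^ 2 := by
    rcases Nat.eq_zero_or_pos k with hk | hk
    · subst hk; subst hn; simp
    · have h3 : 3 ≤ n ^ 2 := by nlinarith
      have h4 : k * 3 ≤ k * n ^ 2 := Nat.mul_le_mul_left k h3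
      rw [Nat.mul_sub]
      omega
  refine ⟨H, ?_, ?_, ?_⟩
  · -- connectivity
    rw [SimpleGraph.connected_iff]
    refine ⟨?_, ⟨⟨w₀, hwmem⟩⟩⟩
    have key : ∀ v : (↑H : Set (X3CVtx E n)),
        ((x3cGraph E n F).induce (↑H : Set (X3CVtx E n))).Reachable v ⟨w₀, hwmem⟩ := by
      rintro ⟨v, hv⟩
      rcases (hmem v).1 hv with ⟨e, rfl⟩ | ⟨i, hi, rfl⟩ | rfl
      · obtain ⟨i, hi, he⟩ := hcov e
        have hiH : (Sum.inr (Sum.inl i) : X3CVtx E n) ∈ H :=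
          (hmem _).2 (Or.inr (Or.inl ⟨i, hi, rfl⟩))
        have a1 : ((x3cGraph E n F).induce (↑H : Set (X3CVtx E n))).Adj
            ⟨Sum.inl e, hv⟩ ⟨Sum.inr (Sum.inl i), hiH⟩ := x3c_adj_es he
        have a2 : ((x3cGraph E n F).induce (↑H : Set (X3CVtx E n))).Adj
            ⟨Sum.inr (Sum.inl i), hiH⟩ ⟨w₀, hwmem⟩ := x3c_adj_sw
        exact (a1.reachable).trans a2.reachable
      · have a2 : ((x3cGraph E n F).induce (↑H : Set (X3CVtx E n))).Adj
            ⟨Sum.inr (Sum.inl i), hv⟩ ⟨w₀, hwmem⟩ := x3c_adj_sw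
        exact a2.reachable
      · rfl
    intro a b
    exact (key a).trans (key b).symm
  · -- balance
    have hfb : H.filter (fun v => x3cBlue v = true) =
        (Finset.univ.image (Sum.inl : E → X3CVtx E n)) ∪ {w₀} := by
      ext v
      rcases v with e | i | u
      · rw [Finset.mem_filter]; simp [hmem, x3cBlue, hw₀]
      · rw [Finset.mem_filter]; simp [hmem, x3cBlue, hw₀]
      · rw [Finset.mem_filter]; simp [hmem, x3cBlue, hw₀]
    have hfr : H.filter (fun v => x3cBlue v = false) =
        I.image (fun i => Sum.inr (Sum.inl i)) := by
      ext v
      rcases v with e | i | u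
      · rw [Finset.mem_filter]; simp [hmem, x3cBlue, hw₀]
      · rw [Finset.mem_filter]; simp [hmem, x3cBlue, hw₀]
      · rw [Finset.mem_filter]; simp [hmem, x3cBlue, hw₀]
    rw [hfb, hfr, Finset.sum_union (by simp [hw₀]), Finset.sum_image (by simp [Sum.inl_injective]),
      Finset.sum_image (by simp)]
    simp only [x3cWt, Finset.sum_const, smul_eq_mul, Finset.card_univ, hE,
      Finset.sum_singleton, hIcard, mul_one]
    exact hkey
  · have hsplit := Finset.sum_filter_add_sum_filter_not H (fun v => x3cBlue v = true)
      (x3cWt n k)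
    have hnot : H.filter (fun v => ¬ x3cBlue v = true) = H.filter (fun v => x3cBlue v = false) := by
      apply Finset.filter_congr; intro v _; simp
    rw [hnot] at hsplit
    have hfb : H.filter (fun v => x3cBlue v = true) =
        (Finset.univ.image (Sum.inl : E → X3CVtx E n)) ∪ {w₀} := by
      ext v
      rcases v with e | i | u <;> rw [Finset.mem_filter] <;> simp [hmem, x3cBlue, hw₀]
    have hfr : H.filter (fun v => x3cBlue v = false) =
        I.image (fun i => Sum.inr (Sum.inl i)) := by
      ext v
      rcases v with e | i | u <;> rw [Finset.mem_filter] <;> simp [hmem, x3cBlue, hw₀]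
    rw [hfb, hfr, Finset.sum_union (by simp [hw₀]), Finset.sum_image (by simp [Sum.inl_injective]),
      Finset.sum_image (by simp)] at hsplit
    simp only [x3cWt, Finset.sum_const, smul_eq_mul, Finset.card_univ, hE,
      Finset.sum_singleton, hIcard, mul_one, hw₀] at hsplit
    simp only [x3cWt]
    linarith [hsplit, hkey]

lemma x3c_bwd (E : Type) [Fintype E] [DecidableEq E] (k n : ℕ)
    (hn : n = 3 * k) (hE : Fintype.card E = 3 * k)
    (F : Fin n → Finset E) (hF : ∀ i, (F i).card = 3)
    (H : Finset (X3CVtx E n))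
    (hconn : ((x3cGraph E n F).induce (↑H : Set (X3CVtx E n))).Connected)
    (hbal : (∑ v ∈ H.filter (fun v => x3cBlue v = true), x3cWt n k v) =
        (∑ v ∈ H.filter (fun v => x3cBlue v = false), x3cWt n k v))
    (htot : 2 * k * n ^ 2 ≤ ∑ v ∈ H, x3cWt n k v) (hk : 1 ≤ k) :
    (∃ I : Finset (Fin n),
      (I : Set (Fin n)).Pairwise (fun i j => Disjoint (F i) (F j)) ∧
      ∀ e : E, ∃ i ∈ I, e ∈ F i) := by
  classical
  set w₀ : X3CVtx E n := Sum.inr (Sum.inr ()) with hw₀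
  set HE : Finset E := Finset.univ.filter (fun e => Sum.inl e ∈ H) with hHE
  set HI : Finset (Fin n) := Finset.univ.filter (fun i => Sum.inr (Sum.inl i) ∈ H) with hHI
  have h3n : 3 ≤ n := by omega
  have h3 : 3 ≤ n ^ 2 := by nlinarith
  -- the two filter identities
  have hfb : H.filter (fun v => x3cBlue v = true) =
      HE.image Sum.inl ∪ (if w₀ ∈ H then {w₀} else ∅) := by
    ext v
    rcases v with e | i | u <;>
      · by_cases hw : w₀ ∈ H <;> rw [Finset.mem_filter] <;> simp only [hw₀] at hw ⊢ <;> simp [hHE, x3cBlue, hw, Finset.mem_filter]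
  have hfr : H.filter (fun v => x3cBlue v = false) =
      HI.image (fun i => Sum.inr (Sum.inl i)) := by
    ext v
    rcases v with e | i | u <;> rw [Finset.mem_filter] <;> simp [hHI, x3cBlue, hw₀, Finset.mem_filter]
  have hred : (∑ v ∈ H.filter (fun v => x3cBlue v = false), x3cWt n k v) = HI.card * n ^ 2 := by
    rw [hfr, Finset.sum_image (by simp)]
    simp [x3cWt]
  have hblue : (∑ v ∈ H.filter (fun v => x3cBlue v = true), x3cWt n k v) =
      HE.card + (if w₀ ∈ H then k * (n ^ 2 - 3) else 0) := by
    rw [hfb, Finset.sum_union]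
    · rw [Finset.sum_image (by simp)]
      simp only [x3cWt]
      by_cases hw : w₀ ∈ H <;> simp [hw] <;> simp [hw₀]
    · by_cases hw : w₀ ∈ H <;> simp [hw] <;> simp [hw₀]
  -- total
  have hsplit := Finset.sum_filter_add_sum_filter_not H (fun v => x3cBlue v = true) (x3cWt n k)
  have hnot : H.filter (fun v => ¬ x3cBlue v = true) = H.filter (fun v => x3cBlue v = false) := by
    apply Finset.filter_congr; intro v _; simp
  rw [hnot] at hsplit
  rw [hblue, hred] at hbal
  rw [← hsplit, hred, hblue, hbal] at htot
  -- derive HI.card = k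
  have hn2pos : 0 < n ^ 2 := by omega
  have hIk : k ≤ HI.card := by nlinarith
  have hHEle : HE.card ≤ 3 * k := by
    calc HE.card ≤ Fintype.card E := by
          rw [← Finset.card_univ]; exact Finset.card_le_card (Finset.filter_subset _ _)
      _ = 3 * k := hE
  have hwle : (if w₀ ∈ H then k * (n ^ 2 - 3) else 0) ≤ k * (n ^ 2 - 3) := by
    split <;> omega
  have hkey : 3 * k + k * (n ^ 2 - 3) = k * n ^ 2 := by
    have h4 : k * 3 ≤ k * n ^ 2 := Nat.mul_le_mul_left k h3
    rw [Nat.mul_sub]; omega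
  have hIk' : HI.card ≤ k := by nlinarith
  have hIcard : HI.card = k := le_antisymm hIk' hIk
  -- w₀ ∈ H and HE = univ
  have hwH : w₀ ∈ H := by
    by_contra hw
    rw [if_neg hw] at hbal
    rw [hIcard] at hbal
    nlinarith
  rw [if_pos hwH, hIcard] at hbal
  have hHEcard : HE.card = 3 * k := by omega
  have hHEuniv : ∀ e : E, Sum.inl e ∈ H := by
    have huniv : HE = Finset.univ := Finset.eq_univ_of_card _ (by rw [hHEcard, ← hE])
    intro e
    have he : e ∈ HE := huniv ▸ Finset.mem_univ e
    simpa [hHE] using he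
  -- covering
  have hcov : ∀ e : E, ∃ i ∈ HI, e ∈ F i := by
    intro e
    have heH : Sum.inl e ∈ H := hHEuniv e
    have hne : (⟨Sum.inl e, heH⟩ : (↑H : Set (X3CVtx E n))) ≠ ⟨w₀, hwH⟩ := by
      simp [hw₀]
    obtain ⟨p⟩ := hconn.preconnected ⟨Sum.inl e, heH⟩ ⟨w₀, hwH⟩
    obtain ⟨u, hadj, q, -⟩ := SimpleGraph.Walk.not_nil_iff.1
      (SimpleGraph.Walk.not_nil_of_ne (p := p) hne)
    have hadj' : (x3cGraph E n F).Adj (Sum.inl e) u.val := hadj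
    obtain ⟨i, hui, hei⟩ := x3c_adj_inl hadj'
    refine ⟨i, ?_, hei⟩
    have := u.property
    rw [hui] at this
    simp only [hHI, Finset.mem_filter, Finset.mem_univ, true_and]
    exact this
  refine ⟨HI, ?_, hcov⟩
  -- counting: each e is covered exactly once
  have hdouble : ∑ e ∈ (Finset.univ : Finset E),
      (HI.filter (fun i => e ∈ F i)).card = 3 * k := by
    simp only [Finset.card_filter]
    rw [Finset.sum_comm]
    have : ∀ i ∈ HI, (∑ e ∈ (Finset.univ : Finset E), if e ∈ F i then 1 else 0) = 3 := by
      intro i _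
      rw [← Finset.card_filter, Finset.filter_univ_mem, hF]
    rw [Finset.sum_congr rfl this]
    simp [hIcard, mul_comm]
  have hone : ∀ e : E, (HI.filter (fun i => e ∈ F i)).card = 1 := by
    have hle : ∀ e ∈ (Finset.univ : Finset E),
        1 ≤ (HI.filter (fun i => e ∈ F i)).card := by
      intro e _
      obtain ⟨i, hi, hei⟩ := hcov e
      exact Finset.card_pos.2 ⟨i, Finset.mem_filter.2 ⟨hi, hei⟩⟩
    have hsum1 : ∑ e ∈ (Finset.univ : Finset E), (1 : ℕ) = 3 * k := by
      simp [hE]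
    have := (Finset.sum_eq_sum_iff_of_le hle).1 (by rw [hsum1, hdouble])
    intro e
    exact (this e (Finset.mem_univ e)).symm
  intro i hi j hj hij
  rw [Finset.disjoint_left]
  intro x hxi hxj
  have hsub : ({i, j} : Finset (Fin n)) ⊆ HI.filter (fun i => x ∈ F i) := by
    intro y hy
    rcases Finset.mem_insert.1 hy with rfl | hy
    · exact Finset.mem_filter.2 ⟨hi, hxi⟩
    · rw [Finset.mem_singleton.1 hy]
      exact Finset.mem_filter.2 ⟨hj, hxj⟩
  have h2 : 2 ≤ (HI.filter (fun i => x ∈ F i)).card := by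
    rw [← Finset.card_pair hij]
    exact Finset.card_le_card hsub
  rw [hone x] at h2
  omega

/-- with `|E| = 3k` and `𝓕 = {S_1,…,S_n}`, `n = 3k`, a collection of
3-element subsets, `𝓕` has an exact 3-cover (a pairwise disjoint subcollection
covering `E`) iff the reduction graph has a connected induced subgraph whose blue
and red total weights are equal and whose total weight is at least `2kn²`. -/
theorem stmt_7 (E : Type) [Fintype E] [DecidableEq E] (k n : ℕ)
    (hn : n = 3 * k) (hE : Fintype.card E = 3 * k)
    (F : Fin n → Finset E) (hF : ∀ i, (F i).card = 3) :
    (∃ I : Finset (Fin n),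
      (I : Set (Fin n)).Pairwise (fun i j => Disjoint (F i) (F j)) ∧
      ∀ e : E, ∃ i ∈ I, e ∈ F i) ↔
    (∃ H : Finset (X3CVtx E n),
      ((x3cGraph E n F).induce (↑H : Set (X3CVtx E n))).Connected ∧
      (∑ v ∈ H.filter (fun v => x3cBlue v = true), x3cWt n k v) =
        (∑ v ∈ H.filter (fun v => x3cBlue v = false), x3cWt n k v) ∧
      2 * k * n ^ 2 ≤ ∑ v ∈ H, x3cWt n k v) := by
  classical
  constructor
  · rintro ⟨I, hdisj, hcov⟩
    have hbU : I.biUnion F = Finset.univ := by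
      apply Finset.eq_univ_iff_forall.2
      intro e
      obtain ⟨i, hi, he⟩ := hcov e
      exact Finset.mem_biUnion.2 ⟨i, hi, he⟩
    have hIcard : I.card = k := by
      have h1 : (I.biUnion F).card = ∑ i ∈ I, (F i).card :=
        Finset.card_biUnion (fun i hi j hj hij => hdisj hi hj hij)
      rw [hbU, Finset.card_univ, hE] at h1
      simp only [hF, Finset.sum_const, smul_eq_mul] at h1
      omega
    exact x3c_fwd E k n hn hE F hF I hdisj hcov hIcard
  · rintro ⟨H, hconn, hbal, htot⟩
    rcases Nat.eq_zero_or_pos k with hk | hk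
    · refine ⟨∅, by simp, fun e => ?_⟩
      have : IsEmpty E := Fintype.card_eq_zero_iff.1 (by omega)
      exact this.elim e
    · exact x3c_bwd E k n hn hE F hF H hconn hbal htot hk
end

section
/- In the Exact 3-Cover reduction graph G (with |E| = 3k, |𝓕| = n = 3k, blue weights: v_e has weight 1, w has weight k(n² − 3); red weights: v_S has weight n²), every connected induced weight-balanced subgraph has total weight at most 2kn², and a weight-balanced subgraph of total weight exactly 2kn² contains exactly k vertices of V_𝓕, all vertices of V_E, and w. -/
/-- in the Exact 3-Cover reduction graph (with `|E| = 3k`, `n = 3k`,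
`k ≥ 1`), every connected induced weight-balanced subgraph has total weight at
most `2kn²`; and every weight-balanced subgraph of total weight exactly `2kn²`
contains exactly `k` vertices of `V_𝓕`, all vertices of `V_E`, and `w`. -/
theorem stmt_8 (E : Type) [Fintype E] [DecidableEq E] (k n : ℕ) (hk : 0 < k)
    (hn : n = 3 * k) (hE : Fintype.card E = 3 * k)
    (F : Fin n → Finset E) (hF : ∀ i, (F i).card = 3) :
    (∀ H : Finset (X3CVtx E n),
      ((x3cGraph E n F).induce (↑H : Set (X3CVtx E n))).Connected →
      (∑ v ∈ H.filter (fun v => x3cBlue v = true), x3cWt n k v) =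
        (∑ v ∈ H.filter (fun v => x3cBlue v = false), x3cWt n k v) →
      (∑ v ∈ H, x3cWt n k v) ≤ 2 * k * n ^ 2) ∧
    (∀ H : Finset (X3CVtx E n),
      (∑ v ∈ H.filter (fun v => x3cBlue v = true), x3cWt n k v) =
        (∑ v ∈ H.filter (fun v => x3cBlue v = false), x3cWt n k v) →
      (∑ v ∈ H, x3cWt n k v) = 2 * k * n ^ 2 →
      (H.filter (fun v => x3cBlue v = false)).card = k ∧
      (∀ e : E, Sum.inl e ∈ H) ∧ Sum.inr (Sum.inr ()) ∈ H) := by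
  have hn9 : 9 ≤ n ^ 2 := by nlinarith
  -- full blue set
  set S : Finset (X3CVtx E n) := Finset.univ.filter (fun v => x3cBlue v = true) with hS
  have hSsum : ∑ v ∈ S, x3cWt n k v = k * n ^ 2 := by
    rw [hS, Finset.sum_filter, Fintype.sum_sum_type, Fintype.sum_sum_type]
    simp only [x3cBlue, x3cWt, if_true, if_false, Finset.sum_const, smul_eq_mul,
      mul_one, ite_true, ite_false]
    simp [hE]
    have : k * (n ^ 2 - 3) + k * 3 = k * n ^ 2 := by
      rw [← Nat.mul_add, Nat.sub_add_cancel (by omega)]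
    omega
  -- split lemma
  have hsplit : ∀ H : Finset (X3CVtx E n),
      (∑ v ∈ H, x3cWt n k v) =
        (∑ v ∈ H.filter (fun v => x3cBlue v = true), x3cWt n k v) +
        (∑ v ∈ H.filter (fun v => x3cBlue v = false), x3cWt n k v) := by
    intro H
    rw [← Finset.sum_filter_add_sum_filter_not H (fun v => x3cBlue v = true)]
    simp [Bool.not_eq_true]
  have hBle : ∀ H : Finset (X3CVtx E n),
      (∑ v ∈ H.filter (fun v => x3cBlue v = true), x3cWt n k v) ≤ k * n ^ 2 := by
    intro H
    rw [← hSsum]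
    exact Finset.sum_le_sum_of_subset (by
      intro v hv
      simp only [hS, Finset.mem_filter] at hv ⊢
      exact ⟨Finset.mem_univ _, hv.2⟩)
  have h2 : 2 * k * n ^ 2 = k * n ^ 2 + k * n ^ 2 := by ring
  constructor
  · intro H _ hbal
    rw [hsplit H, ← hbal, h2]
    have := hBle H
    omega
  · intro H hbal htot
    have hB : (∑ v ∈ H.filter (fun v => x3cBlue v = true), x3cWt n k v) = k * n ^ 2 := by
      rw [h2] at htot
      have := hsplit H
      have := hBle H
      omega
    have hR : (∑ v ∈ H.filter (fun v => x3cBlue v = false), x3cWt n k v) = k * n ^ 2 := by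
      rw [← hbal]; exact hB
    -- red count
    have hcard : (H.filter (fun v => x3cBlue v = false)).card = k := by
      have : (∑ v ∈ H.filter (fun v => x3cBlue v = false), x3cWt n k v) =
          (H.filter (fun v => x3cBlue v = false)).card * n ^ 2 := by
        rw [Finset.sum_congr rfl (fun v hv => ?_), Finset.sum_const, smul_eq_mul]
        rcases v with e | i | u
        · rw [Finset.mem_filter] at hv; exact absurd hv.2 (fun h => Bool.false_ne_true h.symm)
        · rfl
        · rw [Finset.mem_filter] at hv; exact absurd hv.2 (fun h => Bool.false_ne_true h.symm)
      rw [this] at hR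
      exact Nat.eq_of_mul_eq_mul_right (by positivity) hR
    -- blue set full
    have hsub : H.filter (fun v => x3cBlue v = true) ⊆ S := by
      intro v hv
      simp only [hS, Finset.mem_filter] at hv ⊢
      exact ⟨Finset.mem_univ _, hv.2⟩
    have hBeq : H.filter (fun v => x3cBlue v = true) = S := by
      by_contra hne
      obtain ⟨x, hxS, hxB⟩ := Finset.exists_of_ssubset (hsub.ssubset_of_ne hne)
      have hpos : 0 < x3cWt n k x := by
        rcases x with e | i | u
        · exact Nat.one_pos
        · rw [hS, Finset.mem_filter] at hxS; exact absurd hxS.2 Bool.false_ne_true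
        · show 0 < k * (n ^ 2 - 3); exact Nat.mul_pos hk (by omega)
      have := Finset.sum_lt_sum_of_subset hsub hxS hxB hpos
        (fun v _ _ => Nat.zero_le _)
      omega
    refine ⟨hcard, fun e => ?_, ?_⟩
    · have : Sum.inl e ∈ H.filter (fun v => x3cBlue v = true) := by
        rw [hBeq, hS, Finset.mem_filter]; exact ⟨Finset.mem_univ _, rfl⟩
      exact (Finset.mem_filter.mp this).1
    · have : (Sum.inr (Sum.inr ()) : X3CVtx E n) ∈ H.filter (fun v => x3cBlue v = true) := by
        rw [hBeq, hS, Finset.mem_filter]; exact ⟨Finset.mem_univ _, rfl⟩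
      exact (Finset.mem_filter.mp this).1
end

section
/- If a bipartite graph G with parts X and Y has a connected induced weight-balanced subgraph of total weight W, then the split graph G' obtained from G by adding all edges between pairs of vertices of X also has a connected induced weight-balanced subgraph of total weight at least W; conversely, in the Exact 3-Cover reduction instance, G' has a weight-balanced connected subgraph of total weight 2kn² if and only if G does. -/
/-- The graph obtained from `G` by adding all edges between pairs of distinct
vertices of `X` (turning `X` into a clique). -/
def addClique {V : Type} (G : SimpleGraph V) (X : Finset V) : SimpleGraph V :=
  G ⊔ SimpleGraph.fromRel (fun u v => u ∈ X ∧ v ∈ X)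

/-- The set `V_𝓕` of red vertices of the reduction graph. -/
def x3cRedSet (E : Type) [Fintype E] [DecidableEq E] (n : ℕ) : Finset (X3CVtx E n) :=
  Finset.univ.image (fun i : Fin n => Sum.inr (Sum.inl i))

lemma induce_conn_mono {V : Type} {G G' : SimpleGraph V} (h : G ≤ G') (S : Set V)
    (hc : (G.induce S).Connected) : (G'.induce S).Connected :=
  hc.mono (fun a b hab => by simp only [SimpleGraph.comap_adj] at hab ⊢; exact h hab)

lemma x3c_adj_ei {E : Type} {n : ℕ} {F : Fin n → Finset E} (e : E) (i : Fin n)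
    (h : e ∈ F i) : (x3cGraph E n F).Adj (Sum.inl e) (Sum.inr (Sum.inl i)) := by
  simp only [x3cGraph, SimpleGraph.fromRel_adj]
  exact ⟨by simp, Or.inl (Or.inl ⟨e, i, rfl, rfl, h⟩)⟩

lemma x3c_adj_iw {E : Type} {n : ℕ} {F : Fin n → Finset E} (i : Fin n) :
    (x3cGraph E n F).Adj (Sum.inr (Sum.inl i)) (Sum.inr (Sum.inr ())) := by
  simp only [x3cGraph, SimpleGraph.fromRel_adj]
  exact ⟨by simp, Or.inl (Or.inr ⟨i, rfl, by trivial⟩)⟩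

lemma x3c_back (E : Type) [Fintype E] [DecidableEq E] (k n : ℕ) (hn : n = 3 * k)
    (hcard : Fintype.card E = 3 * k) (F : Fin n → Finset E)
    (H : Finset (X3CVtx E n))
    (hc : ((addClique (x3cGraph E n F) (x3cRedSet E n)).induce
      (↑H : Set (X3CVtx E n))).Connected)
    (hbal : (∑ v ∈ H.filter (fun v => x3cBlue v = true), x3cWt n k v) =
          (∑ v ∈ H.filter (fun v => x3cBlue v = false), x3cWt n k v))
    (htot : (∑ v ∈ H, x3cWt n k v) = 2 * k * n ^ 2) :
    ((x3cGraph E n F).induce (↑H : Set (X3CVtx E n))).Connected := by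
  classical
  rcases Nat.eq_zero_or_pos k with hk | hk
  · -- degenerate case: everything is a subsingleton, the two graphs coincide
    subst hk
    have hn0 : n = 0 := by omega
    subst hn0
    haveI : IsEmpty E := Fintype.card_eq_zero_iff.mp (by simpa using hcard)
    haveI : Subsingleton (X3CVtx E 0) := by
      constructor
      rintro (e | i | u) (e' | i' | u')
      all_goals first
        | exact (IsEmpty.false e).elim
        | exact (IsEmpty.false e').elim
        | exact i.elim0
        | exact i'.elim0
        | rfl
    have heq : addClique (x3cGraph E 0 F) (x3cRedSet E 0) = x3cGraph E 0 F := by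
      ext u v
      exact iff_of_false (fun h => h.ne (Subsingleton.elim u v))
        (fun h => h.ne (Subsingleton.elim u v))
    rwa [heq] at hc
  · have hn3 : 3 ≤ n := by omega
    have hn2 : 0 < n ^ 2 := by positivity
    have h9 : 9 ≤ n ^ 2 := by nlinarith
    have h3n : 3 ≤ n ^ 2 := by omega
    -- the set of chosen red indices and covered elements
    have hfF : H.filter (fun v => x3cBlue v = false) =
        (Finset.univ.filter (fun i : Fin n => Sum.inr (Sum.inl i) ∈ H)).image
          (fun i => Sum.inr (Sum.inl i)) := by
      ext v
      rcases v with e | i | u <;>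
        simp only [Finset.mem_filter, Finset.mem_image, Finset.mem_union] <;> simp [x3cBlue]
    have hred : (∑ v ∈ H.filter (fun v => x3cBlue v = false), x3cWt n k v) =
        (Finset.univ.filter (fun i : Fin n => Sum.inr (Sum.inl i) ∈ H)).card * n ^ 2 := by
      rw [hfF, Finset.sum_image (by intro a _ b _ h; simpa using h)]
      simp [x3cWt]
    have hdisj : Disjoint ((Finset.univ.filter (fun e : E => (Sum.inl e : X3CVtx E n) ∈ H)).image Sum.inl)
        (H.filter (fun v => v = (Sum.inr (Sum.inr ()) : X3CVtx E n))) := by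
      rw [Finset.disjoint_left]
      rintro v hv1 hv2
      simp only [Finset.mem_image, Finset.mem_filter] at hv1 hv2
      obtain ⟨e, _, rfl⟩ := hv1
      exact absurd hv2.2 (by simp)
    have hfT : H.filter (fun v => x3cBlue v = true) =
        (Finset.univ.filter (fun e : E => (Sum.inl e : X3CVtx E n) ∈ H)).image Sum.inl ∪
          H.filter (fun v => v = (Sum.inr (Sum.inr ()) : X3CVtx E n)) := by
      ext v
      rcases v with e | i | u <;>
        simp only [Finset.mem_filter, Finset.mem_image, Finset.mem_union] <;> simp [x3cBlue]
    have hwsum : (∑ v ∈ H.filter (fun v => v = (Sum.inr (Sum.inr ()) : X3CVtx E n)), x3cWt n k v)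
        = if (Sum.inr (Sum.inr ()) : X3CVtx E n) ∈ H then k * (n ^ 2 - 3) else 0 := by
      rw [Finset.filter_eq']
      split <;> simp [x3cWt]
    have hblue : (∑ v ∈ H.filter (fun v => x3cBlue v = true), x3cWt n k v)
        = (Finset.univ.filter (fun e : E => (Sum.inl e : X3CVtx E n) ∈ H)).card +
          (if (Sum.inr (Sum.inr ()) : X3CVtx E n) ∈ H then k * (n ^ 2 - 3) else 0) := by
      rw [hfT, Finset.sum_union hdisj,
        Finset.sum_image (fun a _ b _ h => Sum.inl.inj h), hwsum]
      simp [x3cWt]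
    have hsplit : (∑ v ∈ H, x3cWt n k v) =
        (∑ v ∈ H.filter (fun v => x3cBlue v = true), x3cWt n k v) +
        (∑ v ∈ H.filter (fun v => x3cBlue v = false), x3cWt n k v) := by
      have hfilt : H.filter (fun v => ¬ x3cBlue v = true) =
          H.filter (fun v => x3cBlue v = false) := by
        apply Finset.filter_congr
        intro v _; simp
      rw [← Finset.sum_filter_add_sum_filter_not H (fun v => x3cBlue v = true), hfilt]
    rw [hsplit, hbal, hred] at htot
    rw [hblue, hred] at hbal
    have hRk : (Finset.univ.filter (fun i : Fin n => Sum.inr (Sum.inl i) ∈ H)).card = k := by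
      have h3 : ((Finset.univ.filter (fun i : Fin n => Sum.inr (Sum.inl i) ∈ H)).card +
          (Finset.univ.filter (fun i : Fin n => Sum.inr (Sum.inl i) ∈ H)).card) * n ^ 2
          = (k + k) * n ^ 2 := by rw [add_mul, htot]; ring
      have := Nat.eq_of_mul_eq_mul_right hn2 h3
      omega
    have hEle : (Finset.univ.filter (fun e : E => (Sum.inl e : X3CVtx E n) ∈ H)).card ≤ 3 * k := by
      calc (Finset.univ.filter (fun e : E => (Sum.inl e : X3CVtx E n) ∈ H)).card
          ≤ Finset.univ.card := Finset.card_filter_le _ _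
        _ = 3 * k := by rw [Finset.card_univ, hcard]
    rw [hRk] at hbal
    have hwH : (Sum.inr (Sum.inr ()) : X3CVtx E n) ∈ H := by
      by_contra hw
      rw [if_neg hw] at hbal
      have hk9 : k * 9 ≤ k * n ^ 2 := Nat.mul_le_mul_left k h9
      linarith
    rw [if_pos hwH] at hbal
    have hEcard : (Finset.univ.filter (fun e : E => (Sum.inl e : X3CVtx E n) ∈ H)).card = 3 * k := by
      have h4 : k * (n ^ 2 - 3) + k * 3 = k * n ^ 2 := by
        rw [← Nat.mul_add, Nat.sub_add_cancel h3n]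
      linarith
    have hEall : ∀ e : E, (Sum.inl e : X3CVtx E n) ∈ H := by
      have huniv : (Finset.univ.filter (fun e : E => (Sum.inl e : X3CVtx E n) ∈ H)) = Finset.univ :=
        Finset.eq_univ_of_card _ (by rw [hEcard, hcard])
      rw [Finset.eq_univ_iff_forall] at huniv
      intro e
      exact (Finset.mem_filter.mp (huniv e)).2
    -- coverage: each e has a chosen red neighbor in H
    have hcov : ∀ e : E, ∃ i : Fin n, (Sum.inr (Sum.inl i) : X3CVtx E n) ∈ H ∧ e ∈ F i := by
      intro e
      have hu : (Sum.inl e : X3CVtx E n) ∈ (↑H : Set (X3CVtx E n)) := hEall e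
      have hwS : (Sum.inr (Sum.inr ()) : X3CVtx E n) ∈ (↑H : Set (X3CVtx E n)) := hwH
      obtain ⟨p⟩ := hc.preconnected ⟨_, hu⟩ ⟨_, hwS⟩
      cases p with
      | @cons _ b _ h p' =>
        obtain ⟨v, hvH⟩ := b
        have hadj : (addClique (x3cGraph E n F) (x3cRedSet E n)).Adj (Sum.inl e) v := h
        rw [addClique, SimpleGraph.sup_adj] at hadj
        rcases hadj with hadj | hadj
        · rw [x3cGraph, SimpleGraph.fromRel_adj] at hadj
          obtain ⟨hne, hrel⟩ := hadj
          rcases hrel with (⟨e', i, he', hv, hmem⟩ | ⟨i, hi, -⟩) | (⟨e', i, hv, hi, -⟩ | ⟨i, -, hi⟩)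
          · cases he'
            exact ⟨i, hv ▸ hvH, hmem⟩
          · exact absurd hi (by simp)
          · exact absurd hi (by simp)
          · exact absurd hi (by simp)
        · rw [SimpleGraph.fromRel_adj] at hadj
          obtain ⟨-, hmem⟩ := hadj
          have hmem' : (Sum.inl e : X3CVtx E n) ∈ x3cRedSet E n := by tauto
          exact absurd hmem' (by simp [x3cRedSet])
    -- connectivity of the bipartite induced subgraph
    have hwS : (Sum.inr (Sum.inr ()) : X3CVtx E n) ∈ (↑H : Set (X3CVtx E n)) := hwH
    have key : ∀ u : (↑H : Set (X3CVtx E n)),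
        ((x3cGraph E n F).induce (↑H : Set (X3CVtx E n))).Reachable u ⟨_, hwS⟩ := by
      rintro ⟨(e | i | u), hu⟩
      · obtain ⟨i, hiH, hei⟩ := hcov e
        have hiS : (Sum.inr (Sum.inl i) : X3CVtx E n) ∈ (↑H : Set (X3CVtx E n)) := hiH
        have h1 : ((x3cGraph E n F).induce (↑H : Set (X3CVtx E n))).Adj ⟨Sum.inl e, hu⟩
            ⟨Sum.inr (Sum.inl i), hiS⟩ := x3c_adj_ei e i hei
        have h2 : ((x3cGraph E n F).induce (↑H : Set (X3CVtx E n))).Adj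
            ⟨Sum.inr (Sum.inl i), hiS⟩ ⟨_, hwS⟩ := x3c_adj_iw i
        exact h1.reachable.trans h2.reachable
      · have h2 : ((x3cGraph E n F).induce (↑H : Set (X3CVtx E n))).Adj
            ⟨Sum.inr (Sum.inl i), hu⟩ ⟨_, hwS⟩ := x3c_adj_iw i
        exact h2.reachable
      · exact SimpleGraph.Reachable.refl _
    rw [SimpleGraph.connected_iff]
    exact ⟨fun u v => (key u).trans (key v).symm, ⟨⟨_, hwS⟩⟩⟩

/-- (1) If a bipartite graph `G` with parts `X` (red) and `Xᶜ` (blue)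
has a connected induced weight-balanced subgraph of total weight `W`, then the
split graph obtained by turning `X` into a clique has one of total weight `≥ W`.
(2) In the Exact 3-Cover reduction instance, the split graph `G'` (obtained by
turning `V_𝓕` into a clique) has a weight-balanced connected subgraph of total
weight `2kn²` iff the bipartite graph `G` does. -/
theorem stmt_9 :
    (∀ (V : Type) [Fintype V] [DecidableEq V] (G : SimpleGraph V) (X : Finset V),
      (∀ u v : V, G.Adj u v → (u ∈ X ↔ v ∉ X)) →
      ∀ (w : V → ℕ) (W : ℕ),
      (∃ H : Finset V, (G.induce (↑H : Set V)).Connected ∧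
        (∑ v ∈ H.filter (fun v => v ∉ X), w v) =
          (∑ v ∈ H.filter (fun v => v ∈ X), w v) ∧
        (∑ v ∈ H, w v) = W) →
      (∃ H : Finset V, ((addClique G X).induce (↑H : Set V)).Connected ∧
        (∑ v ∈ H.filter (fun v => v ∉ X), w v) =
          (∑ v ∈ H.filter (fun v => v ∈ X), w v) ∧
        W ≤ ∑ v ∈ H, w v)) ∧
    (∀ (E : Type) [Fintype E] [DecidableEq E] (k n : ℕ), n = 3 * k →
      Fintype.card E = 3 * k → ∀ (F : Fin n → Finset E), (∀ i, (F i).card = 3) →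
      ((∃ H : Finset (X3CVtx E n),
        ((addClique (x3cGraph E n F) (x3cRedSet E n)).induce
          (↑H : Set (X3CVtx E n))).Connected ∧
        (∑ v ∈ H.filter (fun v => x3cBlue v = true), x3cWt n k v) =
          (∑ v ∈ H.filter (fun v => x3cBlue v = false), x3cWt n k v) ∧
        (∑ v ∈ H, x3cWt n k v) = 2 * k * n ^ 2) ↔
      (∃ H : Finset (X3CVtx E n),
        ((x3cGraph E n F).induce (↑H : Set (X3CVtx E n))).Connected ∧
        (∑ v ∈ H.filter (fun v => x3cBlue v = true), x3cWt n k v) =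
          (∑ v ∈ H.filter (fun v => x3cBlue v = false), x3cWt n k v) ∧
        (∑ v ∈ H, x3cWt n k v) = 2 * k * n ^ 2))) := by
  constructor
  · rintro V _ _ G X _hbip w W ⟨H, hc, hb, hs⟩
    exact ⟨H, induce_conn_mono le_sup_left _ hc, hb, hs.ge⟩
  · intro E _ _ k n hn hcard F _hF
    constructor
    · rintro ⟨H, hc, hbal, htot⟩
      exact ⟨H, x3c_back E k n hn hcard F H hc hbal htot, hbal, htot⟩
    · rintro ⟨H, hc, hbal, htot⟩
      exact ⟨H, induce_conn_mono le_sup_left _ hc, hbal, htot⟩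
end

section
/- Let G = (V, E) be a connected bicolored graph with red vertex set R and blue vertex set B, let F be a subtree of G with red vertices R_F = V(F) ∩ R such that F has at most as many blue vertices as red vertices (|V(F) ∩ B| ≤ |R_F|), and F is an inclusion-minimal (minimum-edge) tree with V(F) ∩ R = R_F. If there exists a connected induced subgraph H of G with V(H) ∩ R = R_F and |V(H) ∩ B| = |V(H) ∩ R|, then there exists such a balanced connected subgraph H' with V(F) ⊆ V(H') obtained from V(F) by repeatedly adding blue vertices adjacent to the current set. -/
/-- Let `G` be a connected bicolored graph with red vertices `R`
(the blue vertices being `Rᶜ`), and let `F` be a tree subgraph of `G` with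
`V(F) ∩ R = R_F`, having at most as many blue as red vertices, and having the
minimum number of edges among all tree subgraphs `T` with `V(T) ∩ R = R_F`.
If some connected induced subgraph `H` with `V(H) ∩ R = R_F` is balanced
(equally many blue and red vertices), then there is a balanced connected induced
subgraph `H'` with `V(H') ∩ R = R_F` containing all the vertices of `F`. -/
theorem stmt_10 {V : Type} [Fintype V] (G : SimpleGraph V) (hG : G.Connected)
    (R : Set V) (F : G.Subgraph) (RF : Set V)
    (hRF : F.verts ∩ R = RF)
    (htree : F.coe.IsTree)
    (hmin : ∀ F' : G.Subgraph, F'.coe.IsTree → F'.verts ∩ R = RF →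
      F.edgeSet.ncard ≤ F'.edgeSet.ncard)
    (hblue : (F.verts ∩ Rᶜ).ncard ≤ RF.ncard)
    (hH : ∃ H : Set V, (G.induce H).Connected ∧ H ∩ R = RF ∧
      (H ∩ Rᶜ).ncard = (H ∩ R).ncard) :
    ∃ H' : Set V, F.verts ⊆ H' ∧ (G.induce H').Connected ∧ H' ∩ R = RF ∧
      (H' ∩ Rᶜ).ncard = (H' ∩ R).ncard := by
  classical
  obtain ⟨H, hHconn, hHR, hHbal⟩ := hH
  have hRFsub : RF ⊆ F.verts := by rw [← hRF]; exact Set.inter_subset_left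
  have hRFH : RF ⊆ H := by rw [← hHR]; exact Set.inter_subset_left
  have hRFR : RF ⊆ R := by rw [← hRF]; exact Set.inter_subset_right
  -- RF is nonempty
  have hne : RF.Nonempty := by
    by_contra hempty
    rw [Set.not_nonempty_iff_eq_empty] at hempty
    have h1 : (F.verts ∩ Rᶜ).ncard = 0 := by
      have := hblue; rw [hempty] at this; simpa using this
    have h2 : F.verts ∩ Rᶜ = ∅ := by
      rwa [Set.ncard_eq_zero (Set.toFinite _)] at h1
    have h3 : F.verts = ∅ := by
      ext x
      simp only [Set.mem_empty_iff_false, iff_false]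
      intro hx
      by_cases hxR : x ∈ R
      · have : x ∈ F.verts ∩ R := ⟨hx, hxR⟩
        rw [hRF, hempty] at this; exact this
      · have : x ∈ F.verts ∩ Rᶜ := ⟨hx, hxR⟩
        rw [h2] at this; exact this
    have : Nonempty F.verts := htree.isConnected.nonempty
    obtain ⟨⟨x, hx⟩⟩ := this
    rw [h3] at hx; exact hx
  have hHblue : (H ∩ Rᶜ).ncard = RF.ncard := by rw [hHbal, hHR]
  -- initial connectivity
  have hFconn : (G.induce F.verts).Connected := by
    have := htree.isConnected
    exact this.mono (fun a b h => F.adj_sub h)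
  -- key growth lemma
  suffices key : ∀ n : ℕ, ∀ S : Set V, F.verts ⊆ S → (G.induce S).Connected →
      S ∩ R = RF → RF.ncard - (S ∩ Rᶜ).ncard ≤ n → (S ∩ Rᶜ).ncard ≤ RF.ncard →
      ∃ H' : Set V, F.verts ⊆ H' ∧ (G.induce H').Connected ∧ H' ∩ R = RF ∧
        (H' ∩ Rᶜ).ncard = (H' ∩ R).ncard by
    exact key _ F.verts subset_rfl hFconn hRF le_rfl hblue
  intro n
  induction n with
  | zero =>
    intro S hFS hSconn hSR hsub hle
    have : (S ∩ Rᶜ).ncard = RF.ncard := by omega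
    exact ⟨S, hFS, hSconn, hSR, by rw [this, hSR]⟩
  | succ n ih =>
    intro S hFS hSconn hSR hsub hle
    by_cases heq : (S ∩ Rᶜ).ncard = RF.ncard
    · exact ⟨S, hFS, hSconn, hSR, by rw [heq, hSR]⟩
    have hlt : (S ∩ Rᶜ).ncard < RF.ncard := lt_of_le_of_ne hle heq
    -- there is a blue vertex of H outside S
    have hnot : ¬ (H ∩ Rᶜ ⊆ S) := by
      intro hsubS
      have : H ∩ Rᶜ ⊆ S ∩ Rᶜ := fun x hx => ⟨hsubS hx, hx.2⟩
      have := Set.ncard_le_ncard this (Set.toFinite _)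
      omega
    obtain ⟨b, hbH, hbS⟩ := Set.not_subset.mp hnot
    obtain ⟨r, hr⟩ := hne
    have hrH : r ∈ H := hRFH hr
    have hrS : r ∈ S := hFS (hRFsub hr)
    -- walk in H from b to r, find boundary dart
    obtain ⟨p⟩ := hHconn.preconnected ⟨b, hbH.1⟩ ⟨r, hrH⟩
    obtain ⟨d, _, hd1, hd2⟩ := p.exists_boundary_dart {x : H | (x : V) ∉ S}
      (by simpa using hbS) (by simpa using hrS)
    set y : V := (d.fst : V) with hy
    set x : V := (d.snd : V) with hx
    have hyH : y ∈ H := d.fst.2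
    have hyS : y ∉ S := hd1
    have hxS : x ∈ S := not_not.mp hd2
    have hadj : G.Adj y x := d.adj
    have hyblue : y ∈ Rᶜ := by
      intro hyR
      exact hyS (hFS (hRFsub (hHR ▸ ⟨hyH, hyR⟩)))
    -- the new set
    have hunion : S ∪ {x, y} = insert y S := by
      ext z
      simp only [Set.mem_union, Set.mem_insert_iff, Set.mem_singleton_iff]
      constructor
      · rintro (h | h | h)
        · exact Or.inr h
        · exact Or.inr (h ▸ hxS)
        · exact Or.inl h
      · rintro (h | h)
        · exact Or.inr (Or.inr h)
        · exact Or.inl h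
    have hconn' : (G.induce (insert y S)).Connected := by
      rw [← hunion]
      exact SimpleGraph.induce_union_connected hSconn.preconnected
        (SimpleGraph.induce_pair_connected_of_adj hadj.symm).preconnected
        ⟨x, hxS, Or.inl rfl⟩
    have hSR' : insert y S ∩ R = RF := by
      rw [← hSR]
      ext z
      simp only [Set.mem_inter_iff, Set.mem_insert_iff]
      constructor
      · rintro ⟨h | h, hzR⟩
        · exact absurd (h ▸ hzR) hyblue
        · exact ⟨h, hzR⟩
      · rintro ⟨h, hzR⟩; exact ⟨Or.inr h, hzR⟩
    have hins : insert y S ∩ Rᶜ = insert y (S ∩ Rᶜ) := by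
      ext z
      simp only [Set.mem_inter_iff, Set.mem_insert_iff]
      constructor
      · rintro ⟨h | h, hzR⟩
        · exact Or.inl h
        · exact Or.inr ⟨h, hzR⟩
      · rintro (h | ⟨h1, h2⟩)
        · exact ⟨Or.inl h, h ▸ hyblue⟩
        · exact ⟨Or.inr h1, h2⟩
    have hcard : (insert y S ∩ Rᶜ).ncard = (S ∩ Rᶜ).ncard + 1 := by
      rw [hins, Set.ncard_insert_of_notMem (fun h => hyS h.1) (Set.toFinite _)]
    exact ih (insert y S) (hFS.trans (Set.subset_insert _ _)) hconn' hSR'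
      (by omega) (by omega)
end

section
/- Let T be a finite tree and X a set of at least 3 vertices of T such that every leaf of T belongs to X. Then for any vertex v ∈ X, either v is an internal vertex of T and the edge set of T can be partitioned into two edge-disjoint subtrees T_1 and T_2, both containing v, such that (X ∩ V(T_1)) \ {v} and (X ∩ V(T_2)) \ {v} are both nonempty and partition X \ {v}; or v is a leaf of T and there is a vertex w and a partition of E(T) into three edge-disjoint subtrees F_1, F_2, F_3 where F_1 is the path from v to w, and F_2 and F_3 both contain w and induce a nontrivial partition of (X \ {v}) between them. -/
set_option linter.unusedSectionVars false

open SimpleGraph Walk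

namespace Stmt12Aux

variable {V : Type} [DecidableEq V] {T : SimpleGraph V}

/-- The unique path from `v` to `x` in a tree. -/
noncomputable def pth (hT : T.IsTree) (v x : V) : T.Walk v x :=
  (hT.existsUnique_path v x).exists.choose

lemma pth_isPath (hT : T.IsTree) (v x : V) : (pth hT v x).IsPath :=
  (hT.existsUnique_path v x).exists.choose_spec

lemma pth_unique (hT : T.IsTree) {v x : V} (p : T.Walk v x) (hp : p.IsPath) :
    p = pth hT v x :=
  ((hT.existsUnique_path v x).unique hp (pth_isPath hT v x))

lemma pth_self (hT : T.IsTree) (v : V) : pth hT v v = Walk.nil :=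
  (pth_unique hT Walk.nil (by simp)).symm

lemma mem_support_pth_self (hT : T.IsTree) (v x : V) : x ∈ (pth hT v x).support :=
  Walk.end_mem_support _

lemma pth_takeUntil (hT : T.IsTree) {v x y : V} (hy : y ∈ (pth hT v x).support) :
    pth hT v y = (pth hT v x).takeUntil y hy :=
  (pth_unique hT _ ((pth_isPath hT v x).takeUntil hy)).symm

lemma support_pth_subset (hT : T.IsTree) {v x y : V} (hy : y ∈ (pth hT v x).support) :
    (pth hT v y).support ⊆ (pth hT v x).support := by
  rw [pth_takeUntil hT hy]; exact Walk.support_takeUntil_subset _ hy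

lemma edges_pth_subset (hT : T.IsTree) {v x y : V} (hy : y ∈ (pth hT v x).support) :
    (pth hT v y).edges ⊆ (pth hT v x).edges := by
  rw [pth_takeUntil hT hy]; exact Walk.edges_takeUntil_subset _ hy

lemma length_pth_lt (hT : T.IsTree) {v x y : V} (hy : y ∈ (pth hT v x).support)
    (hyx : y ≠ x) : (pth hT v y).length < (pth hT v x).length := by
  have hspec := Walk.take_spec (pth hT v x) hy
  have hlen : ((pth hT v x).takeUntil y hy).length
      + ((pth hT v x).dropUntil y hy).length = (pth hT v x).length := by
    rw [← Walk.length_append, hspec]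
  have hd : ((pth hT v x).dropUntil y hy).length ≠ 0 := by
    intro h0
    exact hyx (Walk.eq_of_length_eq_zero h0)
  rw [pth_takeUntil hT hy]
  omega

lemma pth_eq_concat_of_adj_mem (hT : T.IsTree) {v x z : V} (hadj : T.Adj z x)
    (hz : z ∈ (pth hT v x).support) : pth hT v x = (pth hT v z).concat hadj := by
  have hdrop : (pth hT v x).dropUntil z hz = Walk.cons hadj Walk.nil := by
    refine (hT.existsUnique_path z x).unique ((pth_isPath hT v x).dropUntil hz) ?_
    simp [Walk.isPath_def, hadj.ne]
  have := Walk.take_spec (pth hT v x) hz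
  rw [hdrop, ← pth_takeUntil hT hz] at this
  rw [← this, Walk.concat_eq_append]

lemma pth_concat_of_adj_not_mem (hT : T.IsTree) {v x z : V} (hadj : T.Adj x z)
    (hz : z ∉ (pth hT v x).support) : pth hT v z = (pth hT v x).concat hadj := by
  refine (pth_unique hT _ ?_).symm
  apply Walk.IsPath.mk'
  rw [Walk.support_concat]
  simp only [List.concat_eq_append, List.nodup_append, List.nodup_cons]
  refine ⟨(pth_isPath hT v x).support_nodup, by simp, ?_⟩
  intro a ha b hb hab
  simp at hb
  subst hb
  subst hab; exact hz ha

/-- Uniqueness of the parent. -/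
lemma parent_unique (hT : T.IsTree) {v x z z' : V} (hadj : T.Adj z x) (hadj' : T.Adj z' x)
    (hz : z ∈ (pth hT v x).support) (hz' : z' ∈ (pth hT v x).support) : z = z' := by
  have h1 := pth_eq_concat_of_adj_mem hT hadj hz
  have h2 := pth_eq_concat_of_adj_mem hT hadj' hz'
  have hlen : (pth hT v z).length = (pth hT v z').length := by
    have l1 : (pth hT v x).length = (pth hT v z).length + 1 := by rw [h1, Walk.length_concat]
    have l2 : (pth hT v x).length = (pth hT v z').length + 1 := by rw [h2, Walk.length_concat]
    omega
  have hsupp : (pth hT v x).support = (pth hT v z).support.concat x := by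
    rw [h1, Walk.support_concat, List.concat_eq_append]
  by_contra hne
  have hz'mem : z' ∈ (pth hT v z).support := by
    have := hsupp ▸ hz'
    rw [List.concat_eq_append, List.mem_append] at this
    rcases this with h | h
    · exact h
    · simp at h; exact absurd h hadj'.ne
  have := length_pth_lt hT hz'mem (fun h => hne h.symm)
  omega

lemma exists_parent (hT : T.IsTree) {v x : V} (hx : x ≠ v) :
    ∃ (x' : V) (h : T.Adj x' x), pth hT v x = (pth hT v x').concat h := by
  cases hp : pth hT v x with
  | nil => exact absurd rfl hx
  | cons h q =>
    obtain ⟨x', q', h', heq⟩ := Walk.exists_cons_eq_concat h q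
    have hpath : (q'.concat h').IsPath := by
      rw [← heq, ← hp]; exact pth_isPath hT v x
    have hq' : q'.IsPath := by
      rw [Walk.concat_eq_append] at hpath
      exact hpath.of_append_left
    refine ⟨x', h', ?_⟩
    rw [heq, pth_unique hT q' hq']

/-- Comparability of vertices on a path from the root. -/
lemma pth_comp (hT : T.IsTree) (v : V) :
    ∀ (n : ℕ) (x : V), (pth hT v x).length ≤ n → ∀ y z, y ∈ (pth hT v x).support →
      z ∈ (pth hT v x).support →
      y ∈ (pth hT v z).support ∨ z ∈ (pth hT v y).support := by
  intro n
  induction n with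
  | zero =>
    intro x hlen y z hy hz
    have hx : v = x := Walk.eq_of_length_eq_zero (Nat.le_zero.mp hlen)
    subst hx
    rw [pth_self hT] at hy hz
    simp at hy hz
    subst hy; subst hz
    simp [pth_self hT]
  | succ n ih =>
    intro x hlen y z hy hz
    by_cases hxv : x = v
    · subst hxv
      rw [pth_self hT] at hy hz
      simp at hy hz
      subst hy; subst hz
      simp [pth_self hT]
    · obtain ⟨x', hadj, hconcat⟩ := exists_parent hT hxv
      have hsupp : (pth hT v x).support = (pth hT v x').support.concat x := by
        rw [hconcat, Walk.support_concat, List.concat_eq_append]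
      have hlen' : (pth hT v x').length ≤ n := by
        have : (pth hT v x).length = (pth hT v x').length + 1 := by
          rw [hconcat, Walk.length_concat]
        omega
      by_cases hyx : y = x
      · subst hyx; right; exact hz
      · by_cases hzx : z = x
        · subst hzx; left; exact hy
        · have hy' : y ∈ (pth hT v x').support := by
            have := hsupp ▸ hy
            rw [List.concat_eq_append, List.mem_append] at this
            rcases this with h | h
            · exact h
            · simp at h; exact absurd h hyx
          have hz' : z ∈ (pth hT v x').support := by
            have := hsupp ▸ hz
            rw [List.concat_eq_append, List.mem_append] at this
            rcases this with h | h
            · exact h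
            · simp at h; exact absurd h hzx
          exact ih x' hlen' y z hy' hz'

lemma pth_comp' (hT : T.IsTree) {v x y z : V} (hy : y ∈ (pth hT v x).support)
    (hz : z ∈ (pth hT v x).support) :
    y ∈ (pth hT v z).support ∨ z ∈ (pth hT v y).support :=
  pth_comp hT v (pth hT v x).length x le_rfl y z hy hz

/-- A vertex in both the part up to `u` and the part after `u` must be `u`. -/
lemma junction (hT : T.IsTree) {v x u y : V} (hu : u ∈ (pth hT v x).support)
    (hy : y ∈ ((pth hT v x).dropUntil u hu).support)
    (hy' : y ∈ (pth hT v u).support) : y = u := by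
  by_contra hne
  have hspec := Walk.take_spec (pth hT v x) hu
  have hnodup : (pth hT v x).support.Nodup := (pth_isPath hT v x).support_nodup
  rw [← hspec, Walk.support_append] at hnodup
  have hdisj := List.disjoint_of_nodup_append hnodup
  have hy'' : y ∈ ((pth hT v x).takeUntil u hu).support := by
    rw [← pth_takeUntil hT hu]; exact hy'
  -- y is in the tail of the support of dropUntil, since y ≠ u
  have htail : y ∈ ((pth hT v x).dropUntil u hu).support.tail := by
    have := Walk.support_eq_cons ((pth hT v x).dropUntil u hu)
    rw [this] at hy
    rw [List.mem_cons] at hy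
    rcases hy with h | h
    · exact absurd h hne
    · exact h
  exact hdisj hy'' htail


lemma pth_of_adj (hT : T.IsTree) {v u : V} (h : T.Adj v u) :
    pth hT v u = Walk.cons h Walk.nil := by
  refine (pth_unique hT _ ?_).symm
  simp [Walk.isPath_def, h.ne]

lemma support_pth_of_adj (hT : T.IsTree) {v u : V} (h : T.Adj v u) :
    (pth hT v u).support = [v, u] := by
  rw [pth_of_adj hT h]; simp

section Leaf
variable [Fintype V] [DecidableRel T.Adj]

lemma exists_leaf (hT : T.IsTree) (v c : V) (hc : c ≠ v) :
    ∃ x, T.degree x = 1 ∧ c ∈ (pth hT v x).support ∧ x ≠ v := by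
  classical
  set M := Finset.univ.filter (fun x => c ∈ (pth hT v x).support) with hM
  have hMne : M.Nonempty := ⟨c, by simp [hM, mem_support_pth_self]⟩
  obtain ⟨x, hxM, hmax⟩ := Finset.exists_max_image M (fun x => (pth hT v x).length) hMne
  have hcx : c ∈ (pth hT v x).support := by simpa [hM] using hxM
  have hxv : x ≠ v := by
    rintro rfl
    rw [pth_self] at hcx
    simp at hcx
    exact hc hcx
  obtain ⟨x', hadj, hconcat⟩ := exists_parent hT hxv
  have hx'mem : x' ∈ (pth hT v x).support := by
    rw [hconcat, Walk.support_concat]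
    simp [List.concat_eq_append, Walk.end_mem_support]
  have hnb : T.neighborFinset x = {x'} := by
    ext z
    simp only [SimpleGraph.mem_neighborFinset, Finset.mem_singleton]
    constructor
    · intro hz
      by_cases hzs : z ∈ (pth hT v x).support
      · exact parent_unique hT hz.symm hadj hzs hx'mem
      · have heq := pth_concat_of_adj_not_mem hT hz hzs
        have hzM : z ∈ M := by
          simp only [hM, Finset.mem_filter, Finset.mem_univ, true_and]
          rw [heq, Walk.support_concat, List.mem_append]
          left; exact hcx
        have hle := hmax z hzM
        have : (pth hT v z).length = (pth hT v x).length + 1 := by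
          rw [heq, Walk.length_concat]
        omega
    · rintro rfl
      exact hadj.symm
  refine ⟨x, ?_, hcx, hxv⟩
  rw [← SimpleGraph.card_neighborFinset_eq_degree, hnb, Finset.card_singleton]

end Leaf

/-- Transfer a walk of `T` into a reachability statement in an induced subgraph
of a `fromEdgeSet` graph. -/
lemma reach_aux {A : Set (Sym2 V)} {S : Set V} :
    ∀ {a b : V} (p : T.Walk a b), (∀ e ∈ p.edges, e ∈ A) → (∀ y ∈ p.support, y ∈ S) →
    ∀ (ha : a ∈ S) (hb : b ∈ S),
      ((SimpleGraph.fromEdgeSet A).induce S).Reachable ⟨a, ha⟩ ⟨b, hb⟩ := by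
  intro a b p
  induction p with
  | nil => intro _ _ ha hb; rfl
  | @cons a c b h q ih =>
    intro he hs ha hb
    have hc : c ∈ S := hs c (by simp)
    have hadj : ((SimpleGraph.fromEdgeSet A).induce S).Adj ⟨a, ha⟩ ⟨c, hc⟩ := by
      simp only [SimpleGraph.comap_adj, Function.Embedding.coe_subtype,
        SimpleGraph.fromEdgeSet_adj]
      exact ⟨he _ (by simp), h.ne⟩
    exact hadj.reachable.trans (ih (fun e hee => he e (by simp [hee]))
      (fun y hy => hs y (by simp [hy])) hc hb)

lemma connected_induce (A : Set (Sym2 V)) (S : Set V) (r : V) (hr : r ∈ S)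
    (h : ∀ x (hx : x ∈ S),
      ((SimpleGraph.fromEdgeSet A).induce S).Reachable ⟨x, hx⟩ ⟨r, hr⟩) :
    ((SimpleGraph.fromEdgeSet A).induce S).Connected := by
  rw [SimpleGraph.connected_iff]
  refine ⟨?_, ⟨⟨r, hr⟩⟩⟩
  intro x y
  obtain ⟨x, hx⟩ := x
  obtain ⟨y, hy⟩ := y
  exact (h x hx).trans (h y hy).symm


lemma mem_support_of_mem_edges' {a b : V} {p : T.Walk a b} {e : Sym2 V}
    (he : e ∈ p.edges) {z : V} (hz : z ∈ e) : z ∈ p.support := by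
  induction e using Sym2.ind with
  | _ c d =>
    rcases Sym2.mem_iff.mp hz with rfl | rfl
    · exact p.fst_mem_support_of_mem_edges he
    · exact p.snd_mem_support_of_mem_edges he

end Stmt12Aux

/-- `(S, A)` is a subtree of the tree `T`: `A` is a set of edges of `T` whose
endpoints all lie in `S`, and the graph with vertex set `S` and edge set `A` is
connected (it is automatically acyclic, being a subgraph of a tree). -/
def IsSubtree {V : Type} (T : SimpleGraph V) (S : Set V) (A : Set (Sym2 V)) : Prop :=
  A ⊆ T.edgeSet ∧ (∀ e ∈ A, ∀ x ∈ e, x ∈ S) ∧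
    ((SimpleGraph.fromEdgeSet A).induce S).Connected

open Stmt12Aux SimpleGraph Walk in
/-- let `T` be a finite tree, `X` a set of at least 3 vertices
containing all leaves of `T`, and `v ∈ X`. Then either `v` is internal and `E(T)`
can be partitioned into two edge-disjoint subtrees both containing `v` whose
`X`-vertices other than `v` form a nontrivial partition of `X \ {v}`; or `v` is a
leaf and `E(T)` can be partitioned into a path from `v` to some vertex `w` plus
two edge-disjoint subtrees containing `w`, which split `X \ {v}` nontrivially. -/
theorem stmt_12 {V : Type} [Fintype V] [DecidableEq V] (T : SimpleGraph V)
    [DecidableRel T.Adj] (hT : T.IsTree) (X : Finset V) (hX : 3 ≤ X.card)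
    (hleaf : ∀ u : V, T.degree u = 1 → u ∈ X) (v : V) (hv : v ∈ X) :
    (T.degree v ≠ 1 ∧
      ∃ (S₁ S₂ : Set V) (A₁ A₂ : Set (Sym2 V)),
        IsSubtree T S₁ A₁ ∧ IsSubtree T S₂ A₂ ∧
        A₁ ∪ A₂ = T.edgeSet ∧ Disjoint A₁ A₂ ∧ v ∈ S₁ ∧ v ∈ S₂ ∧
        ∃ Y₁ Y₂ : Finset V, (↑Y₁ : Set V) ⊆ S₁ ∧ (↑Y₂ : Set V) ⊆ S₂ ∧
          Y₁.Nonempty ∧ Y₂.Nonempty ∧ Disjoint Y₁ Y₂ ∧ Y₁ ∪ Y₂ = X.erase v) ∨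
    (T.degree v = 1 ∧
      ∃ (w : V) (p : T.Walk v w), p.IsPath ∧
      ∃ (S₂ S₃ : Set V) (A₂ A₃ : Set (Sym2 V)),
        IsSubtree T S₂ A₂ ∧ IsSubtree T S₃ A₃ ∧
        {e | e ∈ p.edges} ∪ A₂ ∪ A₃ = T.edgeSet ∧
        Disjoint {e | e ∈ p.edges} A₂ ∧ Disjoint {e | e ∈ p.edges} A₃ ∧
        Disjoint A₂ A₃ ∧ w ∈ S₂ ∧ w ∈ S₃ ∧
        ∃ Y₂ Y₃ : Finset V, (↑Y₂ : Set V) ⊆ S₂ ∧ (↑Y₃ : Set V) ⊆ S₃ ∧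
          Y₂.Nonempty ∧ Y₃.Nonempty ∧ Disjoint Y₂ Y₃ ∧ Y₂ ∪ Y₃ = X.erase v) := by
  classical
  obtain ⟨x₀, hx₀X, hx₀v⟩ := Finset.exists_mem_ne (show 1 < X.card by omega) v
  by_cases hdeg : T.degree v = 1
  · right
    refine ⟨hdeg, ?_⟩
    -- choose w : the D-vertex closest to v
    have hDne : (Finset.univ.filter
        (fun y => y ≠ v ∧ (y ∈ X ∨ 3 ≤ T.degree y))).Nonempty :=
      ⟨x₀, by simp [hx₀v, hx₀X]⟩
    obtain ⟨w, hwD, hwmin⟩ := Finset.exists_min_image _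
      (fun y => (pth hT v y).length) hDne
    simp only [Finset.mem_filter, Finset.mem_univ, true_and] at hwD
    obtain ⟨hwv, hwX3⟩ := hwD
    have hwmin' : ∀ y, y ≠ v → (y ∈ X ∨ 3 ≤ T.degree y) →
        (pth hT v w).length ≤ (pth hT v y).length := by
      intro y h1 h2
      exact hwmin y (by simp [h1, h2])
    -- Claim A : every vertex is on the path to w or beyond w
    have hA : ∀ x, x ∈ (pth hT v w).support ∨ w ∈ (pth hT v x).support := by
      have main : ∀ (n : ℕ) (x : V), (pth hT v x).length ≤ n →
          x ∈ (pth hT v w).support ∨ w ∈ (pth hT v x).support := by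
        intro n
        induction n with
        | zero =>
          intro x hlen
          have hvx : v = x := Walk.eq_of_length_eq_zero (Nat.le_zero.mp hlen)
          exact Or.inl (hvx ▸ Walk.start_mem_support _)
        | succ n ih =>
          intro x hlen
          by_cases hxv : x = v
          · exact Or.inl (hxv ▸ Walk.start_mem_support _)
          · obtain ⟨x', hadj, hconcat⟩ := exists_parent hT hxv
            have hlenx : (pth hT v x).length = (pth hT v x').length + 1 := by
              rw [hconcat, Walk.length_concat]
            have hsuppx : (pth hT v x).support = (pth hT v x').support.concat x := by
              rw [hconcat, Walk.support_concat, List.concat_eq_append]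
            have hsub : (pth hT v x').support ⊆ (pth hT v x).support := by
              intro t ht
              rw [hsuppx, List.concat_eq_append, List.mem_append]
              exact Or.inl ht
            rcases ih x' (by omega) with hx' | hwx'
            · by_cases hxw : x ∈ (pth hT v w).support
              · exact Or.inl hxw
              · by_cases hx'w : x' = w
                · exact Or.inr (hx'w ▸ hsub (mem_support_pth_self hT v x'))
                · exfalso
                  cases hd : (pth hT v w).dropUntil x' hx' with
                  | nil => exact hx'w rfl
                  | cons h' d' =>
                    rename_i y
                    have hy_supp_w : y ∈ (pth hT v w).support := by
                      refine Walk.support_dropUntil_subset _ hx' ?_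
                      rw [hd]
                      simp
                    have hy_ne : y ∉ (pth hT v x').support := by
                      intro hy
                      have : y = x' := junction hT hx' (by rw [hd]; simp) hy
                      exact h'.ne this.symm
                    have hPy : pth hT v y = (pth hT v x').concat h' :=
                      pth_concat_of_adj_not_mem hT h' hy_ne
                    have hleny : (pth hT v y).length = (pth hT v x').length + 1 := by
                      rw [hPy, Walk.length_concat]
                    have hxy : x ≠ y := by
                      rintro rfl
                      exact hxw hy_supp_w
                    by_cases hx'v : x' = v
                    · have h2 : 1 < T.degree v := by
                        rw [← SimpleGraph.card_neighborFinset_eq_degree]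
                        refine Finset.one_lt_card.mpr
                          ⟨x, ?_, y, ?_, hxy⟩
                        · rw [SimpleGraph.mem_neighborFinset]
                          exact hx'v ▸ hadj
                        · rw [SimpleGraph.mem_neighborFinset]
                          exact hx'v ▸ h'
                      omega
                    · obtain ⟨p', hp'adj, hp'concat⟩ := exists_parent hT hx'v
                      have hlenp' : (pth hT v x').length = (pth hT v p').length + 1 := by
                        rw [hp'concat, Walk.length_concat]
                      have hpx : p' ≠ x := by
                        intro h
                        rw [h] at hlenp'
                        omega
                      have hpy : p' ≠ y := by
                        intro h
                        rw [h] at hlenp'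
                        omega
                      have h3 : 3 ≤ T.degree x' := by
                        rw [← SimpleGraph.card_neighborFinset_eq_degree]
                        have hsub3 : ({p', x, y} : Finset V) ⊆ T.neighborFinset x' := by
                          intro t ht
                          rw [SimpleGraph.mem_neighborFinset]
                          simp only [Finset.mem_insert, Finset.mem_singleton] at ht
                          rcases ht with rfl | rfl | rfl
                          · exact hp'adj.symm
                          · exact hadj
                          · exact h'
                        have hcard : ({p', x, y} : Finset V).card = 3 := by
                          rw [Finset.card_insert_of_notMem (by simp [hpx, hpy]),
                            Finset.card_insert_of_notMem (by simp [hxy]),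
                            Finset.card_singleton]
                        calc 3 = ({p', x, y} : Finset V).card := hcard.symm
                          _ ≤ _ := Finset.card_le_card hsub3
                      have hm := hwmin' x' hx'v (Or.inr h3)
                      have hlt := length_pth_lt hT hx' hx'w
                      omega
            · exact Or.inr (hsub hwx')
      intro x
      exact main _ x le_rfl
    -- parent t of w
    obtain ⟨t, htadj, htconcat⟩ := exists_parent hT hwv
    have htmem : t ∈ (pth hT v w).support := by
      rw [htconcat, Walk.support_concat, List.mem_append]
      exact Or.inl (Walk.end_mem_support _)
    -- every X-vertex other than v, w is beyond w
    have minX : ∀ x, x ∈ X → x ≠ v → x ≠ w → w ∈ (pth hT v x).support := by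
      intro x hx hxv hxw
      rcases hA x with h | h
      · have h1 := length_pth_lt hT h hxw
        have h2 := hwmin' x hxv (Or.inl hx)
        omega
      · exact h
    -- edges of the dropUntil part avoid the path edges
    have hdropB : ∀ x (hwx : w ∈ (pth hT v x).support),
        ∀ e ∈ ((pth hT v x).dropUntil w hwx).edges, e ∉ (pth hT v w).edges := by
      intro x hwx e he hmem
      have hnodup : (pth hT v x).edges.Nodup :=
        (pth_isPath hT v x).isTrail.edges_nodup
      have hspec := Walk.take_spec (pth hT v x) hwx
      rw [← hspec, Walk.edges_append] at hnodup
      have hdisj := List.disjoint_of_nodup_append hnodup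
      rw [pth_takeUntil hT hwx] at hmem
      exact hdisj hmem he
    -- vertices of the dropUntil part are beyond w
    have hdropw : ∀ x (hwx : w ∈ (pth hT v x).support),
        ∀ y ∈ ((pth hT v x).dropUntil w hwx).support, w ∈ (pth hT v y).support := by
      intro x hwx y hy
      by_cases hyw : y ∈ (pth hT v w).support
      · have : y = w := junction hT hwx hy hyw
        exact this ▸ mem_support_pth_self hT v y
      · exact (hA y).resolve_left hyw
    by_cases hwX : w ∈ X
    · -- SUBCASE (i) : w ∈ X
      refine ⟨w, pth hT v w, pth_isPath hT v w, {w},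
        {x | w ∈ (pth hT v x).support}, ∅, T.edgeSet \ {e | e ∈ (pth hT v w).edges},
        ?_, ?_, ?_, ?_, ?_, ?_, rfl, mem_support_pth_self hT v w, ?_⟩
      · -- IsSubtree {w} ∅
        refine ⟨Set.empty_subset _, fun e he => absurd he (Set.notMem_empty e), ?_⟩
        apply connected_induce ∅ {w} w rfl
        intro x hx
        have : x = w := hx
        subst this
        exact Reachable.refl _
      · -- IsSubtree S₃ A₃
        have key1 : ∀ a b (hadj : T.Adj a b), pth hT v b = (pth hT v a).concat hadj →
            s(a, b) ∈ T.edgeSet \ {e | e ∈ (pth hT v w).edges} →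
            w ∈ (pth hT v a).support ∧ w ∈ (pth hT v b).support := by
          intro a b hadj hrel ⟨heE, hnB⟩
          have hsuppb : (pth hT v b).support = (pth hT v a).support.concat b := by
            rw [hrel, Walk.support_concat, List.concat_eq_append]
          have hedgeb : (pth hT v b).edges = (pth hT v a).edges.concat s(a, b) := by
            rw [hrel, Walk.edges_concat]
          by_cases hwa : w ∈ (pth hT v a).support
          · refine ⟨hwa, ?_⟩
            rw [hsuppb, List.concat_eq_append, List.mem_append]
            exact Or.inl hwa
          · exfalso
            have haw : a ∈ (pth hT v w).support := (hA a).resolve_right hwa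
            by_cases hwb : w ∈ (pth hT v b).support
            · have hwbe : w = b := by
                rw [hsuppb, List.concat_eq_append, List.mem_append] at hwb
                rcases hwb with h | h
                · exact absurd h hwa
                · simpa using h
              subst hwbe
              apply hnB
              have := pth_eq_concat_of_adj_mem hT hadj haw
              show s(a, w) ∈ (pth hT v w).edges
              rw [this, Walk.edges_concat, List.concat_eq_append, List.mem_append]
              simp
            · have hbw : b ∈ (pth hT v w).support := (hA b).resolve_right hwb
              apply hnB
              have hsubE : (pth hT v b).edges ⊆ (pth hT v w).edges :=
                edges_pth_subset hT hbw
              apply hsubE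
              rw [hedgeb, List.concat_eq_append, List.mem_append]
              simp
        refine ⟨Set.diff_subset, ?_, ?_⟩
        · intro e he
          induction e using Sym2.ind with
          | _ a b =>
            intro z hz
            have hadjab : T.Adj a b := (T.mem_edgeSet).mp he.1
            by_cases hmem : b ∈ (pth hT v a).support
            · have hrel := pth_eq_concat_of_adj_mem hT hadjab.symm hmem
              have := key1 b a hadjab.symm hrel (by rwa [Sym2.eq_swap] at he)
              rcases Sym2.mem_iff.mp hz with rfl | rfl
              · exact this.2
              · exact this.1
            · have hrel := pth_concat_of_adj_not_mem hT hadjab hmem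
              have := key1 a b hadjab hrel he
              rcases Sym2.mem_iff.mp hz with rfl | rfl
              · exact this.1
              · exact this.2
        · apply connected_induce (T.edgeSet \ {e | e ∈ (pth hT v w).edges})
            {x | w ∈ (pth hT v x).support} w (mem_support_pth_self hT v w)
          intro x hx
          have hwx : w ∈ (pth hT v x).support := hx
          refine (reach_aux ((pth hT v x).dropUntil w hwx) ?_ ?_
            (show w ∈ {x | w ∈ (pth hT v x).support} from mem_support_pth_self hT v w) hx).symm
          · intro e he
            exact ⟨Walk.edges_subset_edgeSet _ (Walk.edges_dropUntil_subset _ hwx he),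
              hdropB x hwx e he⟩
          · intro y hy
            exact hdropw x hwx y hy
      · -- union of the three edge sets
        have : ({e | e ∈ (pth hT v w).edges} ∪ ∅ : Set (Sym2 V))
            = {e | e ∈ (pth hT v w).edges} := Set.union_empty _
        rw [this]
        exact Set.union_diff_cancel (fun e he => Walk.edges_subset_edgeSet _ he)
      · exact Set.disjoint_empty _
      · exact Set.disjoint_sdiff_right
      · exact Set.empty_disjoint _
      · -- the Y's
        have hwXe : w ∈ X.erase v := Finset.mem_erase.mpr ⟨hwv, hwX⟩
        refine ⟨{w}, (X.erase v).erase w, by simp, ?_, ⟨w, Finset.mem_singleton_self w⟩,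
          ?_, ?_, ?_⟩
        · intro z hz
          simp only [Finset.coe_erase, Set.mem_diff, Finset.coe_erase,
            Set.mem_singleton_iff] at hz
          obtain ⟨⟨hzX, hzv⟩, hzw⟩ := hz
          exact minX z hzX hzv hzw
        · refine Finset.card_pos.mp ?_
          rw [Finset.card_erase_of_mem hwXe, Finset.card_erase_of_mem hv]
          omega
        · exact Finset.disjoint_singleton_left.mpr (Finset.notMem_erase w _)
        · rw [← Finset.insert_eq, Finset.insert_erase hwXe]
    · -- SUBCASE (ii) : w ∉ X, so deg w ≥ 3
      have hdegw : 3 ≤ T.degree w := hwX3.resolve_left hwX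
      -- w has at least two children
      have hcar2 : 2 ≤ ((T.neighborFinset w).erase t).card := by
        rw [Finset.card_erase_of_mem (by rw [SimpleGraph.mem_neighborFinset]; exact htadj.symm)]
        rw [SimpleGraph.card_neighborFinset_eq_degree]
        omega
      obtain ⟨u₀, hu₀m, u₁, hu₁m, hne01⟩ := Finset.one_lt_card.mp (show 1 < ((T.neighborFinset w).erase t).card by omega)
      rw [Finset.mem_erase, SimpleGraph.mem_neighborFinset] at hu₀m hu₁m
      obtain ⟨hu₀t, hu₀adj⟩ := hu₀m
      obtain ⟨hu₁t, hu₁adj⟩ := hu₁m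
      have hchild : ∀ z, T.Adj w z → z ≠ t → z ∉ (pth hT v w).support := by
        intro z hz hzt hmem
        exact hzt (parent_unique hT hz.symm htadj hmem htmem)
      have hc₀s : u₀ ∉ (pth hT v w).support := hchild u₀ hu₀adj hu₀t
      have hc₁s : u₁ ∉ (pth hT v w).support := hchild u₁ hu₁adj hu₁t
      have hc₀ : pth hT v u₀ = (pth hT v w).concat hu₀adj :=
        pth_concat_of_adj_not_mem hT hu₀adj hc₀s
      have hc₁ : pth hT v u₁ = (pth hT v w).concat hu₁adj :=
        pth_concat_of_adj_not_mem hT hu₁adj hc₁s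
      have hsupp₀ : (pth hT v u₀).support = (pth hT v w).support.concat u₀ := by
        rw [hc₀, Walk.support_concat, List.concat_eq_append]
      have hsupp₁ : (pth hT v u₁).support = (pth hT v w).support.concat u₁ := by
        rw [hc₁, Walk.support_concat, List.concat_eq_append]
      have hwu₀ : w ∈ (pth hT v u₀).support := by
        rw [hsupp₀, List.concat_eq_append, List.mem_append]
        exact Or.inl (Walk.end_mem_support _)
      have hlen₀ : (pth hT v u₀).length = (pth hT v w).length + 1 := by
        rw [hc₀, Walk.length_concat]
      have hlen₁ : (pth hT v u₁).length = (pth hT v w).length + 1 := by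
        rw [hc₁, Walk.length_concat]
      have hu₀v : u₀ ≠ v := by
        intro h
        rw [h] at hlen₀
        rw [pth_self hT] at hlen₀
        simp at hlen₀
      have hu₁v : u₁ ≠ v := by
        intro h
        rw [h] at hlen₁
        rw [pth_self hT] at hlen₁
        simp at hlen₁
      set B : Set (Sym2 V) := {e | e ∈ (pth hT v w).edges} with hB
      set S₂ : Set V := {x | x = w ∨ u₀ ∈ (pth hT v x).support} with hS₂
      set A₂ : Set (Sym2 V) :=
        {e | e ∈ T.edgeSet ∧ ∀ z ∈ e, z = w ∨ u₀ ∈ (pth hT v z).support} with hA₂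
      set S₃ : Set V := {x | w ∈ (pth hT v x).support ∧ u₀ ∉ (pth hT v x).support} with hS₃
      set A₃ : Set (Sym2 V) := T.edgeSet \ (B ∪ A₂) with hA₃
      have hwS₂ : w ∈ S₂ := Or.inl rfl
      have hwS₃ : w ∈ S₃ := ⟨mem_support_pth_self hT v w, hc₀s⟩
      -- key endpoint lemma for A₃
      have key2 : ∀ a b (hadj : T.Adj a b), pth hT v b = (pth hT v a).concat hadj →
          s(a, b) ∈ A₃ → a ∈ S₃ ∧ b ∈ S₃ := by
        intro a b hadj hrel ⟨heE, hnBA⟩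
        rw [Set.mem_union] at hnBA
        push_neg at hnBA
        obtain ⟨hnB, hnA₂⟩ := hnBA
        have hsuppb : (pth hT v b).support = (pth hT v a).support.concat b := by
          rw [hrel, Walk.support_concat, List.concat_eq_append]
        have hedgeb : (pth hT v b).edges = (pth hT v a).edges.concat s(a, b) := by
          rw [hrel, Walk.edges_concat]
        have hu₀a : u₀ ∉ (pth hT v a).support := by
          intro h
          apply hnA₂
          refine ⟨heE, ?_⟩
          intro z hz
          rcases Sym2.mem_iff.mp hz with rfl | rfl
          · exact Or.inr h
          · refine Or.inr ?_
            rw [hsuppb, List.concat_eq_append, List.mem_append]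
            exact Or.inl h
        have hu₀b : u₀ ∉ (pth hT v b).support := by
          intro h
          rw [hsuppb, List.concat_eq_append, List.mem_append] at h
          rcases h with h | h
          · exact hu₀a h
          · simp only [List.mem_singleton] at h
            subst h
            -- b = u₀ ; then a = w
            have haw : a = w := by
              refine parent_unique hT hadj hu₀adj ?_ hwu₀
              rw [hrel, Walk.support_concat, List.mem_append]
              exact Or.inl (Walk.end_mem_support _)
            apply hnA₂
            refine ⟨heE, ?_⟩
            intro z hz
            rcases Sym2.mem_iff.mp hz with rfl | rfl
            · exact Or.inl haw
            · exact Or.inr (mem_support_pth_self hT v z)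
        by_cases hwa : w ∈ (pth hT v a).support
        · refine ⟨⟨hwa, hu₀a⟩, ⟨?_, hu₀b⟩⟩
          rw [hsuppb, List.concat_eq_append, List.mem_append]
          exact Or.inl hwa
        · exfalso
          have haw : a ∈ (pth hT v w).support := (hA a).resolve_right hwa
          by_cases hwb : w ∈ (pth hT v b).support
          · have hwbe : w = b := by
              rw [hsuppb, List.concat_eq_append, List.mem_append] at hwb
              rcases hwb with h | h
              · exact absurd h hwa
              · simpa using h
            subst hwbe
            apply hnB
            have := pth_eq_concat_of_adj_mem hT hadj haw
            show s(a, w) ∈ (pth hT v w).edges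
            rw [this, Walk.edges_concat, List.concat_eq_append, List.mem_append]
            simp
          · have hbw : b ∈ (pth hT v w).support := (hA b).resolve_right hwb
            apply hnB
            have hsubE : (pth hT v b).edges ⊆ (pth hT v w).edges :=
              edges_pth_subset hT hbw
            apply hsubE
            rw [hedgeb, List.concat_eq_append, List.mem_append]
            simp
      refine ⟨w, pth hT v w, pth_isPath hT v w, S₂, S₃, A₂, A₃,
        ?_, ?_, ?_, ?_, ?_, ?_, hwS₂, hwS₃, ?_⟩
      · -- IsSubtree T S₂ A₂
        refine ⟨fun e he => he.1, fun e he z hz => he.2 z hz, ?_⟩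
        apply connected_induce A₂ S₂ w hwS₂
        intro x hx
        rcases hx with rfl | hu₀x
        · exact Reachable.refl _
        · have hwx : w ∈ (pth hT v x).support := support_pth_subset hT hu₀x hwu₀
          have hs : ∀ y ∈ ((pth hT v x).dropUntil w hwx).support, y ∈ S₂ := by
            intro y hy
            by_cases hyw : y = w
            · exact Or.inl hyw
            · refine Or.inr ?_
              have hy' : y ∈ (pth hT v x).support :=
                Walk.support_dropUntil_subset _ hwx hy
              rcases pth_comp' hT hy' hu₀x with h | h
              · rw [hsupp₀, List.concat_eq_append, List.mem_append] at h
                rcases h with h | h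
                · exact absurd (junction hT hwx hy h) hyw
                · simp only [List.mem_singleton] at h
                  subst h
                  exact mem_support_pth_self hT v y
              · exact h
          refine (reach_aux ((pth hT v x).dropUntil w hwx) ?_ hs hwS₂ (Or.inr hu₀x)).symm
          intro e he
          refine ⟨Walk.edges_subset_edgeSet _ (Walk.edges_dropUntil_subset _ hwx he), ?_⟩
          intro z hz
          exact hs z (mem_support_of_mem_edges' he hz)
      · -- IsSubtree T S₃ A₃
        refine ⟨fun e he => he.1, ?_, ?_⟩
        · intro e he
          induction e using Sym2.ind with
          | _ a b =>
            intro z hz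
            have hadjab : T.Adj a b := (T.mem_edgeSet).mp he.1
            by_cases hmem : b ∈ (pth hT v a).support
            · have hrel := pth_eq_concat_of_adj_mem hT hadjab.symm hmem
              have := key2 b a hadjab.symm hrel (by rwa [Sym2.eq_swap] at he)
              rcases Sym2.mem_iff.mp hz with rfl | rfl
              · exact this.2
              · exact this.1
            · have hrel := pth_concat_of_adj_not_mem hT hadjab hmem
              have := key2 a b hadjab hrel he
              rcases Sym2.mem_iff.mp hz with rfl | rfl
              · exact this.1
              · exact this.2
        · apply connected_induce A₃ S₃ w hwS₃
          intro x hx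
          obtain ⟨hwx, hu₀x⟩ := hx
          have hs : ∀ y ∈ ((pth hT v x).dropUntil w hwx).support, y ∈ S₃ := by
            intro y hy
            have hy' : y ∈ (pth hT v x).support :=
              Walk.support_dropUntil_subset _ hwx hy
            exact ⟨hdropw x hwx y hy, fun h => hu₀x (support_pth_subset hT hy' h)⟩
          refine (reach_aux ((pth hT v x).dropUntil w hwx) ?_ hs hwS₃ ⟨hwx, hu₀x⟩).symm
          intro e he
          induction e using Sym2.ind with
          | _ a b =>
            have heE : s(a, b) ∈ T.edgeSet :=
              Walk.edges_subset_edgeSet _ (Walk.edges_dropUntil_subset _ hwx he)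
            refine ⟨heE, ?_⟩
            rw [Set.mem_union]
            rintro (hBmem | hA₂mem)
            · exact hdropB x hwx _ he hBmem
            · obtain ⟨-, hall⟩ := hA₂mem
              have hadjab : T.Adj a b := (T.mem_edgeSet).mp heE
              have haS : a ∈ S₃ := hs a (mem_support_of_mem_edges' he (by simp))
              have hbS : b ∈ S₃ := hs b (mem_support_of_mem_edges' he (by simp))
              by_cases haw : a = w
              · rcases hall b (by simp) with h | h
                · exact hadjab.ne' (haw.symm ▸ h.symm ▸ rfl)
                · exact hbS.2 h
              · rcases hall a (by simp) with h | h
                · exact haw h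
                · exact haS.2 h
      · -- union
        show B ∪ A₂ ∪ A₃ = T.edgeSet
        rw [hA₃]
        refine Set.union_diff_cancel ?_
        refine Set.union_subset ?_ (fun e he => he.1)
        intro e he
        exact Walk.edges_subset_edgeSet _ he
      · -- Disjoint B A₂
        rw [Set.disjoint_left]
        intro e heB heA
        induction e using Sym2.ind with
        | _ a b =>
          have hadjab : T.Adj a b := (T.mem_edgeSet).mp heA.1
          have haw : a ∈ (pth hT v w).support := (pth hT v w).fst_mem_support_of_mem_edges heB
          have hbw : b ∈ (pth hT v w).support := (pth hT v w).snd_mem_support_of_mem_edges heB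
          have ha : a = w := by
            rcases heA.2 a (by simp) with h | h
            · exact h
            · exact absurd (support_pth_subset hT haw h) hc₀s
          have hb : b = w := by
            rcases heA.2 b (by simp) with h | h
            · exact h
            · exact absurd (support_pth_subset hT hbw h) hc₀s
          exact hadjab.ne (ha.trans hb.symm)
      · -- Disjoint B A₃
        have : Disjoint (B ∪ A₂) A₃ := by
          rw [hA₃]
          exact Set.disjoint_sdiff_right
        exact (Set.disjoint_union_left.mp this).1
      · -- Disjoint A₂ A₃
        have : Disjoint (B ∪ A₂) A₃ := by
          rw [hA₃]
          exact Set.disjoint_sdiff_right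
        exact (Set.disjoint_union_left.mp this).2
      · -- the Y's
        refine ⟨(X.erase v).filter (fun x => u₀ ∈ (pth hT v x).support),
          (X.erase v).filter (fun x => u₀ ∉ (pth hT v x).support), ?_, ?_, ?_, ?_, ?_, ?_⟩
        · intro z hz
          simp only [Finset.coe_filter, Set.mem_setOf_eq] at hz
          exact Or.inr hz.2
        · intro z hz
          simp only [Finset.coe_filter, Set.mem_setOf_eq, Finset.mem_erase] at hz
          obtain ⟨⟨hzv, hzX⟩, hzu⟩ := hz
          have hzw : z ≠ w := by
            rintro rfl
            exact hwX hzX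
          exact ⟨minX z hzX hzv hzw, hzu⟩
        · obtain ⟨l, hl1, hl2, hl3⟩ := exists_leaf hT v u₀ hu₀v
          exact ⟨l, Finset.mem_filter.mpr ⟨Finset.mem_erase.mpr ⟨hl3, hleaf l hl1⟩, hl2⟩⟩
        · obtain ⟨l, hl1, hl2, hl3⟩ := exists_leaf hT v u₁ hu₁v
          refine ⟨l, Finset.mem_filter.mpr ⟨Finset.mem_erase.mpr ⟨hl3, hleaf l hl1⟩, ?_⟩⟩
          intro hu₀l
          rcases pth_comp' hT hu₀l hl2 with h | h
          · rw [hsupp₁, List.concat_eq_append, List.mem_append] at h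
            rcases h with h | h
            · exact hc₀s h
            · simp at h
              exact hne01 h
          · rw [hsupp₀, List.concat_eq_append, List.mem_append] at h
            rcases h with h | h
            · exact hc₁s h
            · simp at h
              exact hne01 h.symm
        · exact Finset.disjoint_filter_filter_not _ _ _
        · exact Finset.filter_union_filter_not_eq _ _
  · -- CASE 1 : v is internal
    left
    refine ⟨hdeg, ?_⟩
    -- v has at least two neighbors
    obtain ⟨v', hv'adj, -⟩ := exists_parent hT (v := x₀) (x := v) (fun h => hx₀v h.symm)
    have hdeg2 : 1 < T.degree v := by
      have : 0 < T.degree v := by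
        rw [SimpleGraph.degree_pos_iff_exists_adj]
        exact ⟨v', hv'adj.symm⟩
      omega
    rw [← SimpleGraph.card_neighborFinset_eq_degree, Finset.one_lt_card] at hdeg2
    obtain ⟨u₀, hu₀m, u₁, hu₁m, hne01⟩ := hdeg2
    rw [SimpleGraph.mem_neighborFinset] at hu₀m hu₁m
    have hu₀v : u₀ ≠ v := hu₀m.ne'
    have hu₁v : u₁ ≠ v := hu₁m.ne'
    have hsupp₀ : (pth hT v u₀).support = [v, u₀] := support_pth_of_adj hT hu₀m
    have hsupp₁ : (pth hT v u₁).support = [v, u₁] := support_pth_of_adj hT hu₁m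
    set S₁ : Set V := {x | x = v ∨ u₀ ∈ (pth hT v x).support} with hS₁
    set A₁ : Set (Sym2 V) :=
      {e | e ∈ T.edgeSet ∧ ∀ z ∈ e, z = v ∨ u₀ ∈ (pth hT v z).support} with hA₁
    set S₂ : Set V := {x | u₀ ∉ (pth hT v x).support} with hS₂
    set A₂ : Set (Sym2 V) := T.edgeSet \ A₁ with hA₂
    have hvS₁ : v ∈ S₁ := Or.inl rfl
    have hvS₂ : v ∈ S₂ := by
      rw [hS₂, Set.mem_setOf_eq, pth_self hT]
      simp [hu₀v]
    -- supports of paths to S₁ vertices stay in S₁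
    have CS1 : ∀ x, x ∈ S₁ → ∀ y ∈ (pth hT v x).support, y ∈ S₁ := by
      intro x hx y hy
      rcases hx with rfl | hx
      · rw [pth_self hT] at hy
        simp at hy
        exact Or.inl hy
      · rcases pth_comp' hT hy hx with h | h
        · rw [hsupp₀] at h
          simp at h
          rcases h with rfl | rfl
          · exact Or.inl rfl
          · exact Or.inr (mem_support_pth_self hT v y)
        · exact Or.inr h
    have EA1 : ∀ x, x ∈ S₁ → ∀ e ∈ (pth hT v x).edges, e ∈ A₁ := by
      intro x hx e he
      exact ⟨Walk.edges_subset_edgeSet _ he,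
        fun z hz => CS1 x hx z (mem_support_of_mem_edges' he hz)⟩
    have CS2 : ∀ x, x ∈ S₂ → ∀ y ∈ (pth hT v x).support, y ∈ S₂ := by
      intro x hx y hy hu
      exact hx (support_pth_subset hT hy hu)
    have EA2 : ∀ x, x ∈ S₂ → ∀ e ∈ (pth hT v x).edges, e ∈ A₂ := by
      intro x hx e he
      refine ⟨Walk.edges_subset_edgeSet _ he, ?_⟩
      intro heA₁
      obtain ⟨heE, hall⟩ := heA₁
      induction e using Sym2.ind with
      | _ a b =>
        have hadjab : T.Adj a b := (T.mem_edgeSet).mp heE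
        have haS₂ : a ∈ S₂ := CS2 x hx a (mem_support_of_mem_edges' he (by simp))
        have hbS₂ : b ∈ S₂ := CS2 x hx b (mem_support_of_mem_edges' he (by simp))
        by_cases hav : a = v
        · subst hav
          rcases hall b (by simp) with h | h
          · exact hadjab.ne' h
          · exact hbS₂ h
        · rcases hall a (by simp) with h | h
          · exact hav h
          · exact haS₂ h
    -- key endpoint lemma for A₂
    have key : ∀ a b (hadj : T.Adj a b), pth hT v b = (pth hT v a).concat hadj →
        s(a, b) ∈ A₂ → u₀ ∉ (pth hT v a).support ∧ u₀ ∉ (pth hT v b).support := by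
      intro a b hadj hrel ⟨heE, hnA₁⟩
      have hsuppb : (pth hT v b).support = (pth hT v a).support.concat b := by
        rw [hrel, Walk.support_concat, List.concat_eq_append]
      have ha : u₀ ∉ (pth hT v a).support := by
        intro hu
        apply hnA₁
        refine ⟨heE, ?_⟩
        intro z hz
        rcases Sym2.mem_iff.mp hz with rfl | rfl
        · exact Or.inr hu
        · refine Or.inr ?_
          rw [hsuppb, List.concat_eq_append, List.mem_append]
          exact Or.inl hu
      refine ⟨ha, ?_⟩
      intro hu
      rw [hsuppb, List.concat_eq_append, List.mem_append] at hu
      rcases hu with hu | hu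
      · exact ha hu
      · simp at hu
        subst hu
        -- b = u₀, so a = v
        have h1 : (pth hT v u₀).length = (pth hT v a).length + 1 := by
          rw [hrel, Walk.length_concat]
        have h2 : (pth hT v u₀).length = 1 := by
          rw [pth_of_adj hT hu₀m]
          simp
        have hav : v = a := Walk.eq_of_length_eq_zero (p := pth hT v a) (by omega)
        apply hnA₁
        refine ⟨heE, ?_⟩
        intro z hz
        rcases Sym2.mem_iff.mp hz with rfl | rfl
        · exact Or.inl hav.symm
        · exact Or.inr (mem_support_pth_self hT v z)
    refine ⟨S₁, S₂, A₁, A₂, ?_, ?_, ?_, ?_, hvS₁, hvS₂, ?_⟩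
    · -- IsSubtree T S₁ A₁
      refine ⟨fun e he => he.1, fun e he z hz => he.2 z hz, ?_⟩
      apply connected_induce A₁ S₁ v hvS₁
      intro x hx
      exact (reach_aux (pth hT v x) (EA1 x hx) (CS1 x hx) hvS₁ hx).symm
    · -- IsSubtree T S₂ A₂
      refine ⟨fun e he => he.1, ?_, ?_⟩
      · intro e he
        induction e using Sym2.ind with
        | _ a b =>
          intro z hz
          have hadjab : T.Adj a b := (T.mem_edgeSet).mp he.1
          by_cases hmem : b ∈ (pth hT v a).support
          · have hrel := pth_eq_concat_of_adj_mem hT hadjab.symm hmem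
            have := key b a hadjab.symm hrel (by rwa [Sym2.eq_swap] at he)
            rcases Sym2.mem_iff.mp hz with rfl | rfl
            · exact this.2
            · exact this.1
          · have hrel := pth_concat_of_adj_not_mem hT hadjab hmem
            have := key a b hadjab hrel he
            rcases Sym2.mem_iff.mp hz with rfl | rfl
            · exact this.1
            · exact this.2
      · apply connected_induce A₂ S₂ v hvS₂
        intro x hx
        exact (reach_aux (pth hT v x) (EA2 x hx) (CS2 x hx) hvS₂ hx).symm
    · exact Set.union_diff_cancel fun e he => he.1
    · exact Set.disjoint_sdiff_right
    · -- the Y's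
      refine ⟨(X.erase v).filter (fun x => u₀ ∈ (pth hT v x).support),
        (X.erase v).filter (fun x => u₀ ∉ (pth hT v x).support), ?_, ?_, ?_, ?_, ?_, ?_⟩
      · intro z hz
        simp only [Finset.coe_filter, Set.mem_setOf_eq] at hz
        exact Or.inr hz.2
      · intro z hz
        simp only [Finset.coe_filter, Set.mem_setOf_eq] at hz
        exact hz.2
      · obtain ⟨l, hl1, hl2, hl3⟩ := exists_leaf hT v u₀ hu₀v
        exact ⟨l, Finset.mem_filter.mpr ⟨Finset.mem_erase.mpr ⟨hl3, hleaf l hl1⟩, hl2⟩⟩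
      · obtain ⟨l, hl1, hl2, hl3⟩ := exists_leaf hT v u₁ hu₁v
        refine ⟨l, Finset.mem_filter.mpr ⟨Finset.mem_erase.mpr ⟨hl3, hleaf l hl1⟩, ?_⟩⟩
        intro hu₀l
        rcases pth_comp' hT hu₀l hl2 with h | h
        · rw [hsupp₁] at h
          simp at h
          rcases h with rfl | rfl
          · exact hu₀v rfl
          · exact hne01 rfl
        · rw [hsupp₀] at h
          simp at h
          rcases h with rfl | rfl
          · exact hu₁v rfl
          · exact hne01 rfl
      · exact Finset.disjoint_filter_filter_not _ _ _
      · exact Finset.filter_union_filter_not_eq _ _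
end

section
/- Let v_1,...,v_n be intervals sorted by left endpoint (l_1 < l_2 < ... < l_n, all 2n endpoints distinct) with colors f(v_i) ∈ {+1, −1}. Define bcs(i, k, d) = maximum |S| over nonempty S ⊆ {v_1,...,v_i} such that the interval graph induced by S is connected, max_{v ∈ S} r_v = k, and Σ_{v ∈ S} f(v) = d (−∞ if none exists). Then for i ≥ 1 and k > r_i: bcs(i, k, d) = max{bcs(i−1, k, d − f(v_i)) + 1, bcs(i−1, k, d)}. -/
open SimpleGraph

lemma induce_connected_insert {V : Type*} {G : SimpleGraph V} {S : Set V}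
    (hS : (G.induce S).Connected) {a v : V} (hv : v ∈ S) (hadj : G.Adj a v) :
    (G.induce (insert a S)).Connected := by
  rw [connected_iff]
  refine ⟨?_, ⟨⟨a, Set.mem_insert a S⟩⟩⟩
  have hvi : v ∈ insert a S := Set.mem_insert_of_mem _ hv
  have key : ∀ x : ↑(insert a S), (G.induce (insert a S)).Reachable x ⟨v, hvi⟩ := by
    rintro ⟨u, hu⟩
    rcases hu with rfl | hu
    · exact SimpleGraph.Adj.reachable (by simpa using hadj)
    · have := hS.preconnected ⟨u, hu⟩ ⟨v, hv⟩
      exact this.map (G.induceHomOfLE (Set.subset_insert a S)).toHom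
  intro x y
  exact (key x).trans (key y).symm

lemma induce_connected_erase {V : Type*} {G : SimpleGraph V} {S : Set V}
    (hS : (G.induce S).Connected) {w v : V} (hw : w ∈ S) (hv : v ∈ S) (hvw : v ≠ w)
    (hdom : ∀ u ∈ S, G.Adj u w → u = v ∨ G.Adj u v) :
    (G.induce (S \ {w})).Connected := by
  classical
  have hv' : v ∈ S \ {w} := ⟨hv, hvw⟩
  rw [connected_iff]
  refine ⟨?_, ⟨⟨v, hv'⟩⟩⟩
  set ρ : ↑S → ↑(S \ {w}) := fun x =>
    if h : (x : V) = w then ⟨v, hv'⟩ else ⟨x, ⟨x.2, h⟩⟩ with hρ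
  have step : ∀ (x c : ↑S), (G.induce S).Adj x c →
      (G.induce (S \ {w})).Reachable (ρ x) (ρ c) := by
    rintro ⟨x, hx⟩ ⟨c, hc⟩ hadj
    have hadj' : G.Adj x c := by simpa using hadj
    by_cases hxw : x = w <;> by_cases hcw : c = w
    · rw [hxw, hcw] at hadj'
      exact absurd hadj' (G.loopless.irrefl w)
    · have e1 : ρ ⟨x, hx⟩ = ⟨v, hv'⟩ := by simp [hρ, hxw]
      have e2 : ρ ⟨c, hc⟩ = ⟨c, ⟨hc, hcw⟩⟩ := by simp [hρ, hcw]
      rw [e1, e2]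
      have hcwadj : G.Adj c w := by rw [hxw] at hadj'; exact hadj'.symm
      rcases hdom c hc hcwadj with rfl | h
      · rfl
      · exact SimpleGraph.Adj.reachable (by simpa using h.symm)
    · have e1 : ρ ⟨x, hx⟩ = ⟨x, ⟨hx, hxw⟩⟩ := by simp [hρ, hxw]
      have e2 : ρ ⟨c, hc⟩ = ⟨v, hv'⟩ := by simp [hρ, hcw]
      rw [e1, e2]
      have hxwadj : G.Adj x w := by rw [hcw] at hadj'; exact hadj'
      rcases hdom x hx hxwadj with rfl | h
      · rfl
      · exact SimpleGraph.Adj.reachable (by simpa using h)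
    · have e1 : ρ ⟨x, hx⟩ = ⟨x, ⟨hx, hxw⟩⟩ := by simp [hρ, hxw]
      have e2 : ρ ⟨c, hc⟩ = ⟨c, ⟨hc, hcw⟩⟩ := by simp [hρ, hcw]
      rw [e1, e2]
      exact SimpleGraph.Adj.reachable (by simpa using hadj')
  have key : ∀ (x y : ↑S) (_ : (G.induce S).Walk x y),
      (G.induce (S \ {w})).Reachable (ρ x) (ρ y) := by
    intro x y p
    induction p with
    | nil => rfl
    | cons h p ih => exact (step _ _ h).trans ih
  rintro ⟨a, ha⟩ ⟨b, hb⟩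
  have haw : a ≠ w := by simpa using ha.2
  have hbw : b ≠ w := by simpa using hb.2
  have := key ⟨a, ha.1⟩ ⟨b, hb.1⟩ (hS.preconnected ⟨a, ha.1⟩ ⟨b, hb.1⟩).some
  have h1 : ρ ⟨a, ha.1⟩ = ⟨a, ha⟩ := by simp [hρ, haw]
  have h2 : ρ ⟨b, hb.1⟩ = ⟨b, hb⟩ := by simp [hρ, hbw]
  rwa [h1, h2] at this

/-- The interval graph of the integer intervals `[l v, r v]`, `v : Fin n`:
two distinct vertices are adjacent iff their intervals intersect. -/
def intervalGraphZ {n : ℕ} (l r : Fin n → ℤ) : SimpleGraph (Fin n) where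
  Adj u v := u ≠ v ∧ max (l u) (l v) ≤ min (r u) (r v)
  symm := by
    constructor
    intro u v ⟨h₁, h₂⟩
    exact ⟨h₁.symm, by rw [max_comm, min_comm]; exact h₂⟩
  loopless := by constructor; intro u h; exact h.1 rfl

/-- `bcsI l r f i k d`: the maximum cardinality of a nonempty set `S` of interval
indices `< i` that is connected in the interval graph, has `max_{v ∈ S} r v = k`,
and has `∑_{v ∈ S} f v = d`; it is `⊥` (= -∞) if no such set exists. -/
noncomputable def bcsI {n : ℕ} (l r f : Fin n → ℤ) (i : ℕ) (k d : ℤ) : WithBot ℕ∞ :=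
  sSup {m | ∃ S : Finset (Fin n), S.Nonempty ∧ (∀ v ∈ S, (v : ℕ) < i) ∧
    ((intervalGraphZ l r).induce (↑S : Set (Fin n))).Connected ∧
    (∃ v ∈ S, r v = k) ∧ (∀ v ∈ S, r v ≤ k) ∧ (∑ v ∈ S, f v) = d ∧
    m = ((S.card : ℕ∞) : WithBot ℕ∞)}

lemma intervalGraphZ_adj {n : ℕ} {l r : Fin n → ℤ} {u v : Fin n} :
    (intervalGraphZ l r).Adj u v ↔ u ≠ v ∧ max (l u) (l v) ≤ min (r u) (r v) := Iff.rfl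

/-- the interval DP recurrence in the case `k > r i`: intervals are
sorted by left endpoint, all `2n` endpoints are distinct, colors `f ∈ {+1, -1}`;
then `bcs(i+1, k, d) = max (bcs(i, k, d - f i) + 1) (bcs(i, k, d))`
(here `bcs(i+1, ·, ·)` ranges over subsets of `{v_0, …, v_i}`). -/
theorem stmt_16 {n : ℕ} (l r f : Fin n → ℤ)
    (hsort : ∀ u v : Fin n, u < v → l u < l v)
    (hlr : ∀ v, l v < r v)
    (hdist : Function.Injective (Sum.elim l r : Fin n ⊕ Fin n → ℤ))
    (hf : ∀ v, f v = 1 ∨ f v = -1)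
    (i : Fin n) (k d : ℤ) (hk : r i < k) :
    bcsI l r f ((i : ℕ) + 1) k d =
      (bcsI l r f (i : ℕ) k (d - f i) + 1) ⊔ bcsI l r f (i : ℕ) k d := by
  classical
  have hvlt : ∀ v : Fin n, (v : ℕ) < (i : ℕ) + 1 → v ≠ i → (v : ℕ) < (i : ℕ) := by
    intro v h hne
    rcases lt_or_eq_of_le (Nat.lt_succ_iff.mp h) with h' | h'
    · exact h'
    · exact absurd (Fin.ext h') hne
  unfold bcsI
  apply le_antisymm
  · apply sSup_le
    rintro m ⟨S, hne, hlt, hconn, ⟨v, hvS, hrv⟩, hrle, hsum, rfl⟩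
    by_cases hiS : i ∈ S
    · -- remove i
      have hvne : v ≠ i := by
        intro h; rw [h] at hrv; exact absurd hrv (ne_of_lt hk)
      have hvlti : (v : ℕ) < (i : ℕ) := hvlt v (hlt v hvS) hvne
      have hvfin : v < i := Fin.lt_def.mpr hvlti
      have hlv : l v < l i := hsort v i hvfin
      have hdomi : ∀ u ∈ (↑S : Set (Fin n)), (intervalGraphZ l r).Adj u i →
          u = v ∨ (intervalGraphZ l r).Adj u v := by
        intro u hu hadj
        by_cases huv : u = v
        · exact Or.inl huv
        · right
          rw [intervalGraphZ_adj] at hadj ⊢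
          obtain ⟨-, h2⟩ := hadj
          rw [max_le_iff, le_min_iff, le_min_iff] at h2 ⊢
          refine ⟨huv, ⟨(hlr u).le, ?_⟩, ⟨?_, (hlr v).le⟩⟩ <;>
            linarith [h2.1.1, h2.1.2, h2.2.1, h2.2.2, hlr u, hlr v, hlr i]
      have hconn' := induce_connected_erase hconn (w := i) (v := v)
        (Finset.mem_coe.mpr hiS) (Finset.mem_coe.mpr hvS) hvne hdomi
      rw [← Finset.coe_erase] at hconn'
      have hvS' : v ∈ S.erase i := Finset.mem_erase.mpr ⟨hvne, hvS⟩
      have hsum' : ∑ u ∈ S.erase i, f u = d - f i := by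
        have h := Finset.sum_erase_add S f hiS
        rw [hsum] at h; linarith
      have hmem : (((S.erase i).card : ℕ∞) : WithBot ℕ∞) ∈
          {m | ∃ S : Finset (Fin n), S.Nonempty ∧ (∀ v ∈ S, (v : ℕ) < (i : ℕ)) ∧
            ((intervalGraphZ l r).induce (↑S : Set (Fin n))).Connected ∧
            (∃ v ∈ S, r v = k) ∧ (∀ v ∈ S, r v ≤ k) ∧ (∑ v ∈ S, f v) = d - f i ∧
            m = ((S.card : ℕ∞) : WithBot ℕ∞)} := by
        refine ⟨S.erase i, ⟨v, hvS'⟩, ?_, hconn', ⟨v, hvS', hrv⟩,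
          fun u hu => hrle u (Finset.mem_of_mem_erase hu), hsum', rfl⟩
        intro u hu
        obtain ⟨hune, huS⟩ := Finset.mem_erase.mp hu
        exact hvlt u (hlt u huS) hune
      have hcard : (S.erase i).card + 1 = S.card := Finset.card_erase_add_one hiS
      calc ((S.card : ℕ∞) : WithBot ℕ∞)
          = (((S.erase i).card : ℕ∞) : WithBot ℕ∞) + 1 := by
            rw [← hcard]; push_cast; ring
        _ ≤ sSup {m | ∃ S : Finset (Fin n), S.Nonempty ∧ (∀ v ∈ S, (v : ℕ) < (i : ℕ)) ∧
            ((intervalGraphZ l r).induce (↑S : Set (Fin n))).Connected ∧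
            (∃ v ∈ S, r v = k) ∧ (∀ v ∈ S, r v ≤ k) ∧ (∑ v ∈ S, f v) = d - f i ∧
            m = ((S.card : ℕ∞) : WithBot ℕ∞)} + 1 := add_le_add_left (le_sSup hmem) 1
        _ ≤ _ := le_sup_left
    · refine le_trans (le_sSup ?_) le_sup_right
      exact ⟨S, hne, fun u hu => hvlt u (hlt u hu) (fun h => hiS (h ▸ hu)),
        hconn, ⟨v, hvS, hrv⟩, hrle, hsum, rfl⟩
  · apply sup_le
    · -- bcs(i, k, d - f i) + 1 ≤ bcs(i+1, k, d)
      set A : Set (WithBot ℕ∞) := {m | ∃ S : Finset (Fin n), S.Nonempty ∧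
        (∀ v ∈ S, (v : ℕ) < (i : ℕ)) ∧
        ((intervalGraphZ l r).induce (↑S : Set (Fin n))).Connected ∧
        (∃ v ∈ S, r v = k) ∧ (∀ v ∈ S, r v ≤ k) ∧ (∑ v ∈ S, f v) = d - f i ∧
        m = ((S.card : ℕ∞) : WithBot ℕ∞)} with hA
      rcases Set.eq_empty_or_nonempty A with hAe | hAne
      · rw [hAe, sSup_empty]
        simp
      · have hfin : A.Finite := by
          apply Set.Finite.subset
            (Set.finite_range (fun S : Finset (Fin n) => ((S.card : ℕ∞) : WithBot ℕ∞)))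
          rintro m ⟨S, -, -, -, -, -, -, rfl⟩
          exact ⟨S, rfl⟩
        obtain ⟨S, hne, hlt, hconn, ⟨v, hvS, hrv⟩, hrle, hsum, hsup⟩ :=
          hAne.csSup_mem hfin
        have hiS : i ∉ S := fun h => lt_irrefl _ (hlt i h)
        have hvfin : v < i := Fin.lt_def.mpr (hlt v hvS)
        have hvne : v ≠ i := Fin.ne_of_lt hvfin
        have hadj : (intervalGraphZ l r).Adj i v := by
          rw [intervalGraphZ_adj]
          refine ⟨hvne.symm, ?_⟩
          rw [max_le_iff, le_min_iff, le_min_iff]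
          refine ⟨⟨(hlr i).le, ?_⟩, ?_, (hlr v).le⟩ <;>
            linarith [hlr i, hlr v, hsort v i hvfin]
        have hconn' := induce_connected_insert hconn (Finset.mem_coe.mpr hvS) hadj
        rw [← Finset.coe_insert] at hconn'
        have hcard : (insert i S).card = S.card + 1 := Finset.card_insert_of_notMem hiS
        have hmem : (((insert i S).card : ℕ∞) : WithBot ℕ∞) ∈
            {m | ∃ S : Finset (Fin n), S.Nonempty ∧ (∀ v ∈ S, (v : ℕ) < (i : ℕ) + 1) ∧
              ((intervalGraphZ l r).induce (↑S : Set (Fin n))).Connected ∧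
              (∃ v ∈ S, r v = k) ∧ (∀ v ∈ S, r v ≤ k) ∧ (∑ v ∈ S, f v) = d ∧
              m = ((S.card : ℕ∞) : WithBot ℕ∞)} := by
          refine ⟨insert i S, Finset.insert_nonempty _ _, ?_, hconn',
            ⟨v, Finset.mem_insert_of_mem hvS, hrv⟩, ?_, ?_, rfl⟩
          · intro u hu
            rcases Finset.mem_insert.mp hu with rfl | hu
            · exact Nat.lt_succ_self _
            · exact Nat.lt_succ_of_lt (hlt u hu)
          · intro u hu
            rcases Finset.mem_insert.mp hu with rfl | hu
            · exact hk.le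
            · exact hrle u hu
          · rw [Finset.sum_insert hiS, hsum]; ring
        rw [hsup]
        calc ((S.card : ℕ∞) : WithBot ℕ∞) + 1
            = (((insert i S).card : ℕ∞) : WithBot ℕ∞) := by rw [hcard]; push_cast; ring
          _ ≤ _ := le_sSup hmem
    · apply sSup_le_sSup
      rintro m ⟨S, hne, hlt, hconn, hmax, hrle, hsum, rfl⟩
      exact ⟨S, hne, fun u hu => Nat.lt_succ_of_lt (hlt u hu), hconn, hmax, hrle, hsum, rfl⟩
end

section
/- Let v_1,...,v_n be intervals sorted by left endpoint with distinct endpoints, colored by f(v_i) ∈ {+1, −1}, and define bcs(i, k, d) as before. Then for i ≥ 1 and k = r_i and d ≠ f(v_i): bcs(i, r_i, d) = max over k' with l_i < k' < r_i of bcs(i−1, k', d − f(v_i)) + 1; and for d = f(v_i): bcs(i, r_i, d) = max{1, max over l_i < k' < r_i of bcs(i−1, k', d − f(v_i)) + 1}. -/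
open SimpleGraph

section helpers
variable {n : ℕ} {l r : Fin n → ℤ}

lemma igz_shortcut (hlr : ∀ v, l v < r v) {a b i : Fin n}
    (hla : l a < l i) (hlb : l b < l i)
    (ha : (intervalGraphZ l r).Adj a i) (hb : (intervalGraphZ l r).Adj i b)
    (hab : a ≠ b) : (intervalGraphZ l r).Adj a b := by
  obtain ⟨-, h1⟩ := ha; obtain ⟨-, h2⟩ := hb
  refine ⟨hab, ?_⟩
  have h3 := hlr a; have h4 := hlr b
  simp only [max_le_iff, le_min_iff] at *
  omega

lemma mem_erase_coe {S : Finset (Fin n)} {i : Fin n} {u : ↑(S : Set (Fin n))}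
    (hui : (u : Fin n) ≠ i) : (u : Fin n) ∈ (↑(S.erase i) : Set (Fin n)) :=
  Finset.mem_coe.mpr (Finset.mem_erase.mpr ⟨hui, Finset.mem_coe.mp u.2⟩)

lemma reach_erase (hlr : ∀ v, l v < r v) (S : Finset (Fin n)) (i : Fin n)
    (hli : ∀ v ∈ S, v ≠ i → l v < l i) :
    ∀ N (u w : ↑(S : Set (Fin n))), (hui : (u : Fin n) ≠ i) → ∀ (hwi : (w : Fin n) ≠ i)
      (p : ((intervalGraphZ l r).induce (↑S : Set (Fin n))).Walk u w),
      p.length ≤ N →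
      ((intervalGraphZ l r).induce (↑(S.erase i) : Set (Fin n))).Reachable
        ⟨u, mem_erase_coe hui⟩ ⟨w, mem_erase_coe hwi⟩ := by
  intro N
  induction N with
  | zero =>
    intro u w hui hwi p hp
    cases p with
    | nil => exact Reachable.refl _
    | cons h q => simp [SimpleGraph.Walk.length_cons] at hp
  | succ N ih =>
    intro u w hui hwi p hp
    cases p with
    | nil => exact Reachable.refl _
    | @cons _ x _ h q =>
      simp only [SimpleGraph.Walk.length_cons, Nat.add_le_add_iff_right] at hp
      by_cases hx : (x : Fin n) = i
      · cases q with
        | nil => exact absurd hx hwi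
        | @cons _ y _ h2 q2 =>
          simp only [SimpleGraph.Walk.length_cons] at hp
          have hGux : (intervalGraphZ l r).Adj (u : Fin n) (x : Fin n) := h
          have hGxy : (intervalGraphZ l r).Adj (x : Fin n) (y : Fin n) := h2
          rw [hx] at hGux hGxy
          have hyi : (y : Fin n) ≠ i := Ne.symm hGxy.ne
          by_cases hyu : (y : Fin n) = (u : Fin n)
          · have hyu' : y = u := Subtype.ext hyu
            subst hyu'
            exact ih y w hui hwi q2 (by omega)
          · have hadjG : (intervalGraphZ l r).Adj (u : Fin n) (y : Fin n) :=
              igz_shortcut hlr (hli u u.2 hui) (hli y y.2 hyi) hGux hGxy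
                (fun hh => hyu (hh ▸ rfl))
            have hadj : ((intervalGraphZ l r).induce (↑(S.erase i) : Set (Fin n))).Adj
                ⟨u, mem_erase_coe hui⟩ ⟨y, mem_erase_coe hyi⟩ := hadjG
            exact hadj.reachable.trans (ih y w hyi hwi q2 (by omega))
      · have hadj : ((intervalGraphZ l r).induce (↑(S.erase i) : Set (Fin n))).Adj
            ⟨u, mem_erase_coe hui⟩ ⟨x, mem_erase_coe hx⟩ := h
        exact hadj.reachable.trans (ih x w hx hwi q (by omega))

lemma conn_erase (hlr : ∀ v, l v < r v) {S : Finset (Fin n)} {i : Fin n}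
    (hli : ∀ v ∈ S, v ≠ i → l v < l i)
    (hconn : ((intervalGraphZ l r).induce (↑S : Set (Fin n))).Connected)
    (hne : (S.erase i).Nonempty) :
    ((intervalGraphZ l r).induce (↑(S.erase i) : Set (Fin n))).Connected := by
  rw [connected_iff]
  constructor
  · rintro ⟨u, hu⟩ ⟨w, hw⟩
    have huS : u ∈ S := Finset.mem_of_mem_erase (Finset.mem_coe.mp hu)
    have hwS : w ∈ S := Finset.mem_of_mem_erase (Finset.mem_coe.mp hw)
    have hui : u ≠ i := (Finset.mem_erase.mp (Finset.mem_coe.mp hu)).1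
    have hwi : w ≠ i := (Finset.mem_erase.mp (Finset.mem_coe.mp hw)).1
    obtain ⟨p⟩ := hconn.preconnected ⟨u, huS⟩ ⟨w, hwS⟩
    exact reach_erase hlr S i hli p.length ⟨u, huS⟩ ⟨w, hwS⟩ hui hwi p le_rfl
  · obtain ⟨u, hu⟩ := hne
    exact ⟨⟨u, Finset.mem_coe.mpr hu⟩⟩

lemma conn_insert {S' : Finset (Fin n)} {i v0 : Fin n} (hv0 : v0 ∈ S')
    (hadj : (intervalGraphZ l r).Adj i v0)
    (hconn : ((intervalGraphZ l r).induce (↑S' : Set (Fin n))).Connected) :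
    ((intervalGraphZ l r).induce (↑(insert i S') : Set (Fin n))).Connected := by
  have h1 := SimpleGraph.induce_pair_connected_of_adj (G := intervalGraphZ l r) hadj
  have h2 := SimpleGraph.induce_union_connected h1.preconnected hconn.preconnected ⟨v0, by simp [hv0]⟩
  have he : ({i, v0} ∪ ↑S' : Set (Fin n)) = ↑(insert i S') := by
    ext x
    simp only [Set.mem_union, Set.mem_insert_iff, Set.mem_singleton_iff, Finset.coe_insert,
      Finset.mem_coe]
    constructor
    · rintro ((h | h) | h)
      · exact Or.inl h
      · exact Or.inr (h ▸ hv0)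
      · exact Or.inr h
    · rintro (h | h)
      · exact Or.inl (Or.inl h)
      · exact Or.inr h
  rwa [he] at h2

lemma exists_neighbor {S : Finset (Fin n)} {i u : Fin n} (hiS : i ∈ S) (huS : u ∈ S)
    (hui : u ≠ i)
    (hconn : ((intervalGraphZ l r).induce (↑S : Set (Fin n))).Connected) :
    ∃ x ∈ S, x ≠ i ∧ (intervalGraphZ l r).Adj i x := by
  obtain ⟨p⟩ := hconn.preconnected ⟨i, hiS⟩ ⟨u, huS⟩
  cases p with
  | nil => exact absurd rfl hui
  | @cons _ x _ h q =>
    have hadj : (intervalGraphZ l r).Adj i (x : Fin n) := h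
    exact ⟨x, Finset.mem_coe.mp x.2, Ne.symm hadj.ne, hadj⟩

lemma conn_single (i : Fin n) :
    ((intervalGraphZ l r).induce (↑({i} : Finset (Fin n)) : Set (Fin n))).Connected := by
  rw [connected_iff]
  constructor
  · intro u w
    have : u = w := Subtype.ext (by
      have hu := u.2; have hw := w.2
      simp only [Finset.coe_singleton, Set.mem_singleton_iff] at hu hw
      rw [hu, hw])
    exact this ▸ Reachable.refl u
  · exact ⟨⟨i, by simp⟩⟩

/-- the defining set of `bcsI` is finite -/
lemma bcsI_set_finite (l r f : Fin n → ℤ) (i : ℕ) (k d : ℤ) :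
    {m : WithBot ℕ∞ | ∃ S : Finset (Fin n), S.Nonempty ∧ (∀ v ∈ S, (v : ℕ) < i) ∧
    ((intervalGraphZ l r).induce (↑S : Set (Fin n))).Connected ∧
    (∃ v ∈ S, r v = k) ∧ (∀ v ∈ S, r v ≤ k) ∧ (∑ v ∈ S, f v) = d ∧
    m = ((S.card : ℕ∞) : WithBot ℕ∞)}.Finite := by
  apply Set.Finite.subset ((Set.finite_Iic n).image (fun c : ℕ => ((c : ℕ∞) : WithBot ℕ∞)))
  rintro m ⟨S, -, -, -, -, -, -, rfl⟩
  exact ⟨S.card, by simpa using Finset.card_le_univ S, rfl⟩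

end helpers

section main2
variable {n : ℕ}

lemma bcsI_eq (l r f : Fin n → ℤ) (i : ℕ) (k d : ℤ) :
    bcsI l r f i k d = sSup {m | ∃ S : Finset (Fin n), S.Nonempty ∧ (∀ v ∈ S, (v : ℕ) < i) ∧
    ((intervalGraphZ l r).induce (↑S : Set (Fin n))).Connected ∧
    (∃ v ∈ S, r v = k) ∧ (∀ v ∈ S, r v ≤ k) ∧ (∑ v ∈ S, f v) = d ∧
    m = ((S.card : ℕ∞) : WithBot ℕ∞)} := rfl

lemma compose_le (l r f : Fin n → ℤ)
    (hsort : ∀ u v : Fin n, u < v → l u < l v)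
    (hlr : ∀ v, l v < r v)
    (i : Fin n) (d k' : ℤ) (hk1 : l i < k') (hk2 : k' < r i) :
    bcsI l r f (i : ℕ) k' (d - f i) + 1 ≤ bcsI l r f ((i : ℕ) + 1) (r i) d := by
  rcases ({m : WithBot ℕ∞ | ∃ S : Finset (Fin n), S.Nonempty ∧ (∀ v ∈ S, (v : ℕ) < (i:ℕ)) ∧
      ((intervalGraphZ l r).induce (↑S : Set (Fin n))).Connected ∧
      (∃ v ∈ S, r v = k') ∧ (∀ v ∈ S, r v ≤ k') ∧ (∑ v ∈ S, f v) = d - f i ∧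
      m = ((S.card : ℕ∞) : WithBot ℕ∞)}).eq_empty_or_nonempty with hAe | hAne
  · rw [bcsI_eq, hAe, sSup_empty, WithBot.bot_add]; exact bot_le
  · have hmem := hAne.csSup_mem (bcsI_set_finite l r f (i : ℕ) k' (d - f i))
    rw [← bcsI_eq] at hmem
    obtain ⟨S', hS'ne, hidx, hconn', ⟨v0, hv0S, hv0r⟩, hbd, hsum, hcard⟩ := hmem
    have hiS' : i ∉ S' := fun h => lt_irrefl _ (hidx i h)
    have hv0i : v0 ≠ i := fun h => hiS' (h ▸ hv0S)
    have hv0lt : v0 < i := Fin.lt_def.mpr (hidx v0 hv0S)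
    have hadj : (intervalGraphZ l r).Adj i v0 := by
      refine ⟨Ne.symm hv0i, ?_⟩
      have h1 := hsort v0 i hv0lt
      have h2 := hlr i
      simp only [max_le_iff, le_min_iff]
      omega
    have hconn := conn_insert hv0S hadj hconn'
    have hSmem : (((S'.card + 1 : ℕ) : ℕ∞) : WithBot ℕ∞) ≤
        bcsI l r f ((i : ℕ) + 1) (r i) d := by
      rw [bcsI_eq]
      refine le_sSup ⟨insert i S', Finset.insert_nonempty i S', ?_, hconn,
        ⟨i, Finset.mem_insert_self i S', rfl⟩, ?_, ?_, ?_⟩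
      · intro v hv
        rcases Finset.mem_insert.mp hv with h | h
        · rw [h]; omega
        · have := hidx v h; omega
      · intro v hv
        rcases Finset.mem_insert.mp hv with h | h
        · rw [h]
        · exact le_of_lt (lt_of_le_of_lt (hbd v h) hk2)
      · rw [Finset.sum_insert hiS', hsum]; ring
      · rw [Finset.card_insert_of_notMem hiS']
    refine le_trans (le_of_eq ?_) hSmem
    rw [hcard]
    push_cast
    ring

lemma decompose_le (l r f : Fin n → ℤ)
    (hsort : ∀ u v : Fin n, u < v → l u < l v)
    (hlr : ∀ v, l v < r v)
    (hdist : Function.Injective (Sum.elim l r : Fin n ⊕ Fin n → ℤ))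
    (i : Fin n) (d : ℤ) (S : Finset (Fin n))
    (hidx : ∀ v ∈ S, (v : ℕ) < (i : ℕ) + 1)
    (hconn : ((intervalGraphZ l r).induce (↑S : Set (Fin n))).Connected)
    (hmaxw : ∃ v ∈ S, r v = r i) (hbd : ∀ v ∈ S, r v ≤ r i)
    (hsum : ∑ v ∈ S, f v = d) (hS2 : (S.erase i).Nonempty) :
    ∃ k', l i < k' ∧ k' < r i ∧
      ((S.card : ℕ∞) : WithBot ℕ∞) ≤ bcsI l r f (i : ℕ) k' (d - f i) + 1 := by
  have rinj : ∀ u v : Fin n, r u = r v → u = v := by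
    intro u v h
    have := hdist (a₁ := Sum.inr u) (a₂ := Sum.inr v) (by simpa using h)
    simpa using this
  have lrne : ∀ u v : Fin n, l u ≠ r v := by
    intro u v h
    have := hdist (a₁ := Sum.inl u) (a₂ := Sum.inr v) (by simpa using h)
    simp at this
  obtain ⟨vm, hvmS, hvmr⟩ := hmaxw
  have hiS : i ∈ S := rinj vm i hvmr ▸ hvmS
  have hvne : ∀ v ∈ S, v ≠ i → v < i := by
    intro v hv hvi
    have h1 := hidx v hv
    have h2 : (v : ℕ) ≠ (i : ℕ) := fun h => hvi (Fin.val_injective h)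
    exact Fin.lt_def.mpr (by omega)
  have hlv : ∀ v ∈ S, v ≠ i → l v < l i := fun v hv hvi => hsort v i (hvne v hv hvi)
  have hrv : ∀ v ∈ S, v ≠ i → r v < r i := by
    intro v hv hvi
    exact lt_of_le_of_ne (hbd v hv) (fun h => hvi (rinj v i h))
  set S' := S.erase i with hS'def
  have himg : (S'.image r).Nonempty := hS2.image r
  set k' := (S'.image r).max' himg with hk'def
  obtain ⟨v0, hv0S', hv0r⟩ := Finset.mem_image.mp ((S'.image r).max'_mem himg)
  have hbd' : ∀ v ∈ S', r v ≤ k' := fun v hv =>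
    Finset.le_max' _ _ (Finset.mem_image_of_mem r hv)
  have hv0i : v0 ≠ i := (Finset.mem_erase.mp hv0S').1
  have hv0S : v0 ∈ S := Finset.mem_of_mem_erase hv0S'
  have hk2 : k' < r i := by rw [hk'def, ← hv0r]; exact hrv v0 hv0S hv0i
  -- l i < k' via a neighbor of i
  have hS2' := hS2
  obtain ⟨u, huS'⟩ := hS2'
  obtain ⟨x, hxS, hxi, hxadj⟩ := exists_neighbor hiS (Finset.mem_of_mem_erase huS')
    (Finset.mem_erase.mp huS').1 hconn
  have hk1 : l i < k' := by
    obtain ⟨-, hle⟩ := hxadj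
    simp only [max_le_iff, le_min_iff] at hle
    obtain ⟨⟨h11, h12⟩, h21, h22⟩ := hle
    have h2 : l i ≠ r x := lrne i x
    have h3 : r x ≤ k' := hbd' x (Finset.mem_erase.mpr ⟨hxi, hxS⟩)
    omega
  refine ⟨k', hk1, hk2, ?_⟩
  have hconn' := conn_erase hlr hlv hconn hS2
  have hsum' : ∑ v ∈ S', f v = d - f i := by
    have := Finset.sum_erase_add S f hiS
    rw [← hS'def] at this
    omega
  have hmem : (((S'.card : ℕ) : ℕ∞) : WithBot ℕ∞) ≤ bcsI l r f (i : ℕ) k' (d - f i) := by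
    rw [bcsI_eq]
    refine le_sSup ⟨S', hS2, ?_, hconn', ⟨v0, hv0S', by rw [hk'def, hv0r]⟩, hbd', hsum', rfl⟩
    intro v hv
    exact Fin.lt_def.mp (hvne v (Finset.mem_of_mem_erase hv) (Finset.mem_erase.mp hv).1)
  have hcard : S.card = S'.card + 1 := (Finset.card_erase_add_one hiS).symm
  calc ((S.card : ℕ∞) : WithBot ℕ∞) = ((S'.card : ℕ∞) : WithBot ℕ∞) + 1 := by
        rw [hcard]; push_cast; ring
    _ ≤ bcsI l r f (i : ℕ) k' (d - f i) + 1 := add_le_add hmem le_rfl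

end main2

/-- the interval DP recurrence in the case `k = r i`: if `d ≠ f i`
then `bcs(i+1, r i, d) = max over l i < k' < r i of bcs(i, k', d - f i) + 1`, and
if `d = f i` then additionally the singleton `{v_i}` is feasible, so
`bcs(i+1, r i, d) = max (1, max over l i < k' < r i of bcs(i, k', d - f i) + 1)`. -/
theorem stmt_17 {n : ℕ} (l r f : Fin n → ℤ)
    (hsort : ∀ u v : Fin n, u < v → l u < l v)
    (hlr : ∀ v, l v < r v)
    (hdist : Function.Injective (Sum.elim l r : Fin n ⊕ Fin n → ℤ))
    (hf : ∀ v, f v = 1 ∨ f v = -1)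
    (i : Fin n) (d : ℤ) :
    (d ≠ f i → bcsI l r f ((i : ℕ) + 1) (r i) d =
      sSup {m | ∃ k' : ℤ, l i < k' ∧ k' < r i ∧
        m = bcsI l r f (i : ℕ) k' (d - f i) + 1}) ∧
    (d = f i → bcsI l r f ((i : ℕ) + 1) (r i) d =
      1 ⊔ sSup {m | ∃ k' : ℤ, l i < k' ∧ k' < r i ∧
        m = bcsI l r f (i : ℕ) k' (d - f i) + 1}) := by
  have rinj : ∀ u v : Fin n, r u = r v → u = v := by
    intro u v h
    have := hdist (a₁ := Sum.inr u) (a₂ := Sum.inr v) (by simpa using h)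
    simpa using this
  -- if S is a witness then either S = {i} (so d = f i and card = 1), or the
  -- decomposition applies
  have main : ∀ m : WithBot ℕ∞,
      (∃ S : Finset (Fin n), S.Nonempty ∧ (∀ v ∈ S, (v : ℕ) < (i : ℕ) + 1) ∧
        ((intervalGraphZ l r).induce (↑S : Set (Fin n))).Connected ∧
        (∃ v ∈ S, r v = r i) ∧ (∀ v ∈ S, r v ≤ r i) ∧ (∑ v ∈ S, f v) = d ∧
        m = ((S.card : ℕ∞) : WithBot ℕ∞)) →
      (d = f i ∧ m = 1) ∨
      m ≤ sSup {m | ∃ k' : ℤ, l i < k' ∧ k' < r i ∧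
        m = bcsI l r f (i : ℕ) k' (d - f i) + 1} := by
    rintro m ⟨S, hSne, hidx, hconn, hmaxw, hbd, hsum, rfl⟩
    have hiS : i ∈ S := by
      obtain ⟨v, hvS, hvr⟩ := hmaxw
      exact rinj v i hvr ▸ hvS
    rcases (S.erase i).eq_empty_or_nonempty with he | hne
    · left
      have hSi : S = {i} := by
        refine Finset.eq_singleton_iff_unique_mem.mpr ⟨hiS, fun v hv => ?_⟩
        by_contra h
        exact Finset.notMem_empty v (he ▸ Finset.mem_erase.mpr ⟨h, hv⟩)
      constructor
      · rw [← hsum, hSi, Finset.sum_singleton]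
      · rw [hSi, Finset.card_singleton]
        push_cast
        rfl
    · right
      obtain ⟨k', hk1, hk2, hle⟩ :=
        decompose_le l r f hsort hlr hdist i d S hidx hconn hmaxw hbd hsum hne
      exact le_trans hle (le_sSup ⟨k', hk1, hk2, rfl⟩)
  have hub : sSup {m | ∃ k' : ℤ, l i < k' ∧ k' < r i ∧
      m = bcsI l r f (i : ℕ) k' (d - f i) + 1} ≤ bcsI l r f ((i : ℕ) + 1) (r i) d := by
    refine sSup_le ?_
    rintro m ⟨k', hk1, hk2, rfl⟩
    exact compose_le l r f hsort hlr i d k' hk1 hk2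
  constructor
  · intro hd
    refine le_antisymm ?_ hub
    rw [bcsI_eq]
    refine sSup_le fun m hm => ?_
    rcases main m hm with ⟨h1, -⟩ | h
    · exact absurd h1 hd
    · exact h
  · intro hd
    refine le_antisymm ?_ (sup_le ?_ hub)
    · rw [bcsI_eq]
      refine sSup_le fun m hm => ?_
      rcases main m hm with ⟨-, h2⟩ | h
      · rw [h2]; exact le_sup_left
      · exact le_trans h le_sup_right
    · -- 1 ≤ bcsI ... via the singleton {i}
      rw [bcsI_eq]
      refine le_sSup ⟨{i}, Finset.singleton_nonempty i, ?_, conn_single i,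
        ⟨i, Finset.mem_singleton_self i, rfl⟩, ?_, ?_, ?_⟩
      · intro v hv
        rw [Finset.mem_singleton.mp hv]
        omega
      · intro v hv
        rw [Finset.mem_singleton.mp hv]
      · rw [Finset.sum_singleton, hd]
      · rw [Finset.card_singleton]
        push_cast
        rfl
end
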